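/- arXiv:2212.00446 — 10 statements merged into one kernel-verified Lean document; each statement's English description precedes it below -/
import Mathlib

section
/- Let p be a prime and a an integer not divisible by p. Then for every positive integer n, the p-adic valuation of the rational number S_n = Σ_{k=1}^{n} (1/a^k + 1/(p-a)^k) · p^k/k satisfies v_p(S_n) ≥ (n+1) - log_p((n+1)/2). -/
open Finset

section Aux
variable (F : Type*) [Field F] [CharZero F]

/-- coefficient of `s^j` in `x^k + y^k` when `x+y = x*y = s`. -/
noncomputable def cc (k j : ℕ) : F :=
  if j ≤ k then (-1)^(k-j) * ((k : F) / (j : F)) * ((j.choose (k-j)) : F) else 0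

variable {F}

lemma cc_zero (k : ℕ) : cc F k 0 = 0 := by
  simp [cc, div_zero]

omit [CharZero F] in
lemma cc_of_gt {k j : ℕ} (h : k < j) : cc F k j = 0 := by
  simp [cc, Nat.not_le.mpr h]

lemma cc_self {k : ℕ} (hk : 1 ≤ k) : cc F k k = 1 := by
  have : (k:F) ≠ 0 := Nat.cast_ne_zero.mpr (by omega)
  simp [cc, div_self this]

lemma cc_rec (m i : ℕ) (hi : i ≤ m + 2) :
    cc F (m+3) (i+1) = cc F (m+2) i - cc F (m+1) i := by
  rcases Nat.eq_zero_or_pos i with rfl | hi1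
  · have h1 : Nat.choose 1 (m+2) = 0 := Nat.choose_eq_zero_of_lt (by omega)
    simp [cc, h1, cc_zero]
  rcases eq_or_lt_of_le hi with rfl | hilt
  · rw [cc_self (by omega), cc_self (by omega), cc_of_gt (by omega), sub_zero]
  -- now 1 ≤ i ≤ m+1
  have him : i ≤ m + 1 := by omega
  set r : ℕ := m + 1 - i with hr
  have hm1 : m + 1 = i + r := by omega
  have hg1 : (m+3) - (i+1) = r + 1 := by omega
  have hg2 : (m+2) - i = r + 1 := by omega
  have hg3 : (m+1) - i = r := by omega
  have hiF : (i:F) ≠ 0 := Nat.cast_ne_zero.mpr (by omega)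
  have hi1F : ((i:F)+1) ≠ 0 := by
    have := Nat.cast_ne_zero (R := F) (n := i+1) |>.mpr (by omega)
    push_cast at this; exact this
  rw [cc, cc, cc, if_pos (by omega), if_pos (by omega), if_pos (by omega),
    hg1, hg2, hg3]
  -- key absorption identity
  have key : ((i:F) - r) * (i.choose r : F) = ((r:F) + 1) * (i.choose (r+1) : F) := by
    rcases le_or_gt r i with hri | hri
    · have h2 : ((i.choose (r+1) * (r+1) : ℕ) : F) = ((i.choose r * (i - r) : ℕ) : F) := by
        rw [Nat.choose_succ_right_eq i r]
      push_cast [Nat.cast_sub hri] at h2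
      linear_combination -h2
    · rw [Nat.choose_eq_zero_of_lt hri, Nat.choose_eq_zero_of_lt (by omega)]
      simp
  have pascal : ((i+1).choose (r+1) : F) = (i.choose r : F) + (i.choose (r+1) : F) := by
    rw [Nat.choose_succ_succ]; push_cast; ring
  have hcast : ((m:F)+3) = (i:F) + (r:F) + 2 := by
    have : ((m+1 : ℕ) : F) = ((i + r : ℕ) : F) := by rw [hm1]
    push_cast at this; linear_combination this
  rw [pascal]
  push_cast
  rw [hcast]
  have h2cast : (m:F)+2 = (i:F) + (r:F) + 1 := by linear_combination hcast
  have h1cast : (m:F)+1 = (i:F) + (r:F) := by linear_combination hcast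
  rw [h2cast, h1cast]
  field_simp
  linear_combination (-(-1:F)^r) * key
end Aux
section Aux2
open Finset
variable {F : Type*} [Field F] [CharZero F]

lemma lemA {x y s : F} (h1 : x + y = s) (h2 : x * y = s) :
    ∀ k, 1 ≤ k → x^k + y^k = ∑ j ∈ range (k+1), cc F k j * s^j := by
  have hx2 : x^2 = s*x - s := by linear_combination x*h1 - h2
  have hy2 : y^2 = s*y - s := by linear_combination y*h1 - h2
  intro k
  induction k using Nat.strong_induction_on with
  | _ k IH =>
    match k with
    | 0 => intro h; exact absurd h (by omega)
    | 1 =>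
      intro _
      rw [Finset.sum_range_succ, Finset.sum_range_succ, Finset.sum_range_zero]
      rw [cc_zero, cc_self le_rfl]
      simpa using h1
    | 2 =>
      intro _
      rw [Finset.sum_range_succ, Finset.sum_range_succ, Finset.sum_range_succ,
        Finset.sum_range_zero, cc_zero, cc_self (by norm_num)]
      have hc21 : cc F 2 1 = -2 := by
        norm_num [cc]
      rw [hc21]
      linear_combination (x + y + s) * h1 - 2 * h2
    | (m+3) =>
      intro _
      have e2 := IH (m+2) (by omega) (by omega)
      have e1 := IH (m+1) (by omega) (by omega)
      have hx : x^(m+3) = s*x^(m+2) - s*x^(m+1) := by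
        have : x^(m+3) = x^(m+1)*x^2 := by ring
        rw [this, hx2]; ring
      have hy : y^(m+3) = s*y^(m+2) - s*y^(m+1) := by
        have : y^(m+3) = y^(m+1)*y^2 := by ring
        rw [this, hy2]; ring
      have e1' : ∑ j ∈ range (m+3), cc F (m+1) j * s^j
          = ∑ j ∈ range (m+2), cc F (m+1) j * s^j := by
        rw [Finset.sum_range_succ, cc_of_gt (by omega)]
        ring
      calc x^(m+3) + y^(m+3)
          = s*(x^(m+2)+y^(m+2)) - s*(x^(m+1)+y^(m+1)) := by rw [hx, hy]; ring
        _ = s*(∑ j ∈ range (m+3), cc F (m+2) j * s^j)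
            - s*(∑ j ∈ range (m+3), cc F (m+1) j * s^j) := by rw [e2, e1', e1]
        _ = ∑ j ∈ range (m+3), (cc F (m+2) j - cc F (m+1) j) * s^(j+1) := by
            rw [Finset.mul_sum, Finset.mul_sum, ← Finset.sum_sub_distrib]
            apply Finset.sum_congr rfl
            intro j _; ring
        _ = ∑ j ∈ range (m+3), cc F (m+3) (j+1) * s^(j+1) := by
            apply Finset.sum_congr rfl
            intro j hj
            rw [cc_rec m j (by simpa using Nat.lt_succ_iff.mp (Finset.mem_range.mp hj))]
        _ = ∑ j ∈ range (m+4), cc F (m+3) j * s^j := by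
            rw [Finset.sum_range_succ' (fun j => cc F (m+3) j * s^j) (m+3)]
            rw [cc_zero]
            ring

end Aux2
section Aux3
open Finset
variable (F : Type*) [Field F] [CharZero F]

/-- coefficient of `s^j` in `∑_{k=1}^n (x^k+y^k)/k`. -/
noncomputable def dd (n j : ℕ) : F :=
  if j ≤ n then (-1)^(n-j) * (((j-1).choose (n-j) : F) / (j : F)) else 0

variable {F}

lemma dd_zero (n : ℕ) : dd F n 0 = 0 := by
  simp [dd, div_zero]

omit [CharZero F] in
lemma dd_of_gt {n j : ℕ} (h : n < j) : dd F n j = 0 := by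
  simp [dd, Nat.not_le.mpr h]

lemma lemB {x y s : F} (h1 : x + y = s) (h2 : x * y = s) :
    ∀ n : ℕ, 1 ≤ n →
      ∑ k ∈ Icc 1 n, (x^k + y^k)/(k:F) = ∑ j ∈ range (n+1), dd F n j * s^j := by
  intro n hn
  induction n, hn using Nat.le_induction with
  | base =>
    rw [show Finset.Icc 1 1 = {1} from rfl, Finset.sum_singleton,
      Finset.sum_range_succ, Finset.sum_range_succ, Finset.sum_range_zero, dd_zero]
    have : dd F 1 1 = 1 := by norm_num [dd]
    rw [this]
    simpa using h1
  | succ n hn IH =>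
    rw [Finset.sum_Icc_succ_top (by omega : 1 ≤ n + 1), IH]
    rw [lemA h1 h2 (n+1) (by omega)]
    have hn1 : ((n:F)+1) ≠ 0 := by
      have := Nat.cast_ne_zero (R := F) (n := n+1) |>.mpr (by omega)
      push_cast at this; exact this
    -- extend the `dd n` sum to range (n+2)
    have ext : ∑ j ∈ range (n+2), dd F n j * s^j
        = ∑ j ∈ range (n+1), dd F n j * s^j := by
      rw [Finset.sum_range_succ (fun j => dd F n j * s^j) (n+1), dd_of_gt (by omega)]
      ring
    rw [← ext, Finset.sum_div, ← Finset.sum_add_distrib]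
    apply Finset.sum_congr rfl
    intro j hj
    have hjn : j ≤ n + 1 := by
      have := Finset.mem_range.mp hj; omega
    -- coefficientwise: dd (n+1) j = dd n j + cc (n+1) j / (n+1)
    rcases Nat.eq_zero_or_pos j with rfl | hj1
    · rw [dd_zero, dd_zero, cc_zero]; ring
    rcases eq_or_lt_of_le hjn with rfl | hlt
    · -- j = n+1
      rw [dd_of_gt (by omega), cc_self (by omega)]
      rw [dd, if_pos le_rfl]
      simp only [Nat.sub_self, pow_zero, Nat.add_sub_cancel, Nat.choose_zero_right,
        Nat.cast_one, one_mul]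
      ring
    · -- 1 ≤ j ≤ n
      have hjn' : j ≤ n := by omega
      have hjF : (j:F) ≠ 0 := Nat.cast_ne_zero.mpr (by omega)
      have hsub : n + 1 - j = (n - j) + 1 := by omega
      have hj' : j = (j-1)+1 := by omega
      have pascal : (j.choose ((n-j)+1) : F)
          = ((j-1).choose (n-j) : F) + ((j-1).choose ((n-j)+1) : F) := by
        have hp := Nat.choose_succ_succ (j-1) (n-j)
        simp only [Nat.succ_eq_add_one] at hp
        rw [← hj'] at hp
        rw [hp]; push_cast; ring
      rw [dd, dd, cc, if_pos hjn', if_pos (by omega), if_pos (by omega), hsub, pascal]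
      have hsign : (-1:F)^((n-j)+1) = -(-1:F)^(n-j) := by ring
      rw [hsign]
      field_simp
      ring
end Aux3
section Aux4
open Finset

lemma dd_rat_cast (n j : ℕ) : ((dd ℚ n j : ℚ) : ℝ) = dd ℝ n j := by
  unfold dd
  split_ifs <;> push_cast <;> ring

lemma val_sum_ge {p : ℕ} [Fact p.Prime] {ι : Type*} (t : Finset ι) (f : ι → ℚ) (B : ℤ)
    (h : ∀ i ∈ t, f i ≠ 0 → B ≤ padicValRat p (f i)) (h0 : ∑ i ∈ t, f i ≠ 0) :
    B ≤ padicValRat p (∑ i ∈ t, f i) := by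
  classical
  induction t using Finset.induction_on with
  | empty => simp at h0
  | @insert a t ha ih =>
    rw [Finset.sum_insert ha] at h0 ⊢
    by_cases hfa : f a = 0
    · rw [hfa, zero_add] at h0 ⊢
      exact ih (fun i hi hne => h i (Finset.mem_insert_of_mem hi) hne) h0
    · by_cases hrest : ∑ i ∈ t, f i = 0
      · rw [hrest, add_zero] at h0 ⊢
        exact h a (Finset.mem_insert_self a t) hfa
      · refine le_trans (le_min (h a (Finset.mem_insert_self a t) hfa)
          (ih (fun i hi hne => h i (Finset.mem_insert_of_mem hi) hne) hrest))
          (padicValRat.min_le_padicValRat_add h0)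

lemma real_ineq {p n j : ℕ} (hp : 1 < p) (hn : 1 ≤ n) (hj : 1 ≤ j) (h2j : n + 1 ≤ 2*j) :
    ((n:ℝ)+1) - Real.logb p (((n:ℝ)+1)/2) ≤ 2*(j:ℝ) - (padicValNat p j : ℝ) := by
  set v := padicValNat p j with hv
  have hpv : p^v ∣ j := pow_padicValNat_dvd
  have hle : (p:ℝ)^v ≤ (j:ℝ) := by exact_mod_cast Nat.le_of_dvd (by omega) hpv
  have hp2 : (2:ℝ) ≤ (p:ℝ) := by exact_mod_cast hp
  have hlp : Real.log 2 ≤ Real.log p := Real.log_le_log (by norm_num) hp2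
  have hlp2 : (0.6931471803 : ℝ) < Real.log 2 := Real.log_two_gt_d9
  have hlppos : (0:ℝ) < Real.log p := by linarith
  have hjpos : (0:ℝ) < (j:ℝ) := by exact_mod_cast Nat.pos_of_ne_zero (by omega)
  have hnpos : (0:ℝ) < (n:ℝ)+1 := by positivity
  have hn2 : (2:ℝ) ≤ (n:ℝ)+1 := by
    have : (1:ℝ) ≤ (n:ℝ) := by exact_mod_cast hn
    linarith
  have hppos : (0:ℝ) < (p:ℝ) := by linarith
  have hv1 : (v:ℝ) * Real.log p ≤ Real.log j := by
    have h := Real.log_le_log (pow_pos hppos v) hle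
    rwa [Real.log_pow] at h
  have hv2 : (v:ℝ) ≤ Real.log j / Real.log p := (le_div_iff₀ hlppos).mpr hv1
  set u : ℝ := 2*(j:ℝ)/((n:ℝ)+1) with hu
  have h2jR : (n:ℝ)+1 ≤ 2*(j:ℝ) := by exact_mod_cast h2j
  have hu1 : (1:ℝ) ≤ u := (one_le_div hnpos).mpr h2jR
  have hlogu : Real.log u ≤ u - 1 := Real.log_le_sub_one_of_pos (by linarith)
  have hsplit : Real.log j - Real.log (((n:ℝ)+1)/2) = Real.log u := by
    rw [hu, Real.log_div (by positivity : ((n:ℝ)+1) ≠ 0) (by norm_num : (2:ℝ) ≠ 0),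
      Real.log_div (by positivity : (2*(j:ℝ)) ≠ 0) (by positivity : ((n:ℝ)+1) ≠ 0),
      Real.log_mul (by norm_num : (2:ℝ) ≠ 0) (by positivity : ((j:ℝ)) ≠ 0)]
    ring
  have h1 : (1:ℝ) ≤ ((n:ℝ)+1) * Real.log p := by nlinarith
  have key : Real.log u / Real.log p ≤ ((n:ℝ)+1)*(u-1) := by
    rw [div_le_iff₀ hlppos]
    have h2 : u - 1 ≤ (u-1)*(((n:ℝ)+1)*Real.log p) := by nlinarith
    nlinarith
  have huexp : ((n:ℝ)+1)*(u-1) = 2*(j:ℝ) - ((n:ℝ)+1) := by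
    rw [hu]; field_simp
  have hdiv : Real.log j / Real.log p - Real.log (((n:ℝ)+1)/2) / Real.log p
      ≤ 2*(j:ℝ) - ((n:ℝ)+1) := by
    rw [div_sub_div_same, hsplit, ← huexp]; exact key
  rw [Real.logb]
  linarith

end Aux4
open Finset in
/-- Main lower bound: `v_p(S_n) ≥ (n+1) - log_p((n+1)/2)`. -/
theorem stmt0 (p : ℕ) (hp : p.Prime) (a : ℤ) (ha : ¬ (p : ℤ) ∣ a) (n : ℕ) (hn : 1 ≤ n) :
    ((n : ℝ) + 1) - Real.logb p (((n : ℝ) + 1) / 2) ≤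
      (padicValRat p (∑ k ∈ Finset.Icc 1 n,
        (1 / (a : ℚ) ^ k + 1 / ((p : ℚ) - (a : ℚ)) ^ k) * (p : ℚ) ^ k / (k : ℚ)) : ℝ) := by
  haveI : Fact p.Prime := ⟨hp⟩
  have hp1 : 1 < p := hp.one_lt
  have hpQ : (p:ℚ) ≠ 0 := Nat.cast_ne_zero.mpr hp.ne_zero
  have haZ : a ≠ 0 := by rintro rfl; exact ha (dvd_zero _)
  have hpa : (p:ℤ) ≠ a := by rintro rfl; exact ha dvd_rfl
  have haQ : (a:ℚ) ≠ 0 := Int.cast_ne_zero.mpr haZ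
  have hbZ : (p:ℤ) - a ≠ 0 := sub_ne_zero.mpr hpa
  have hbQ : ((p:ℚ) - (a:ℚ)) ≠ 0 := by
    have : (((p:ℤ) - a : ℤ) : ℚ) ≠ 0 := Int.cast_ne_zero.mpr hbZ
    push_cast at this; exact this
  set s : ℚ := (p:ℚ)^2 / ((a:ℚ) * ((p:ℚ) - (a:ℚ))) with hsdef
  set x : ℚ := (p:ℚ) / (a:ℚ) with hxdef
  set y : ℚ := (p:ℚ) / ((p:ℚ) - (a:ℚ)) with hydef
  have h1 : x + y = s := by
    rw [hxdef, hydef, hsdef]; field_simp; ring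
  have h2 : x * y = s := by
    rw [hxdef, hydef, hsdef]; field_simp
  set S : ℚ := ∑ k ∈ Finset.Icc 1 n,
      (1 / (a : ℚ) ^ k + 1 / ((p : ℚ) - (a : ℚ)) ^ k) * (p : ℚ) ^ k / (k : ℚ) with hSdef
  have hSd : S = ∑ j ∈ range (n+1), dd ℚ n j * s^j := by
    rw [hSdef, ← lemB h1 h2 n hn]
    apply Finset.sum_congr rfl
    intro k _
    rw [hxdef, hydef, div_pow, div_pow]
    ring
  have hs_ne : s ≠ 0 := by
    rw [hsdef]
    exact div_ne_zero (pow_ne_zero _ hpQ) (mul_ne_zero haQ hbQ)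
  -- nonvanishing of S
  have hSne : S ≠ 0 := by
    rcases lt_trichotomy s 0 with hneg | hzero | hpos
    · -- s < 0 : all terms of (-1)^n * S are nonneg, top term positive
      have hterm : ∀ j ∈ range (n+1),
          (-1:ℚ)^n * (dd ℚ n j * s^j) = (((j-1).choose (n-j) : ℚ)/(j:ℚ)) * (-s)^j := by
        intro j hj
        have hjn : j ≤ n := by have := Finset.mem_range.mp hj; omega
        have hone : (-1:ℚ)^(n-j)*(-1:ℚ)^(n-j) = 1 := by
          rw [← pow_add, show (n-j)+(n-j) = 2*(n-j) from by ring, pow_mul]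
          norm_num
        have hsplit : (-1:ℚ)^n = (-1:ℚ)^(n-j)*(-1:ℚ)^j := by
          rw [← pow_add]; congr 1; omega
        rw [dd, if_pos hjn, hsplit, neg_pow s j]
        linear_combination ((-1:ℚ)^j * (((j-1).choose (n-j) : ℚ)/(j:ℚ)) * s^j) * hone
      have hpos' : 0 < (-1:ℚ)^n * ∑ j ∈ range (n+1), dd ℚ n j * s^j := by
        rw [Finset.mul_sum]
        apply Finset.sum_pos'
        · intro j hj
          rw [hterm j hj]
          have : (0:ℚ) < (-s)^j := pow_pos (by linarith) j
          positivity
        · refine ⟨n, Finset.self_mem_range_succ n, ?_⟩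
          rw [hterm n (Finset.self_mem_range_succ n)]
          simp only [Nat.sub_self, Nat.choose_zero_right, Nat.cast_one]
          have h1' : (0:ℚ) < (-s)^n := pow_pos (by linarith) n
          have h2' : (0:ℚ) < 1/(n:ℚ) := by
            have : (0:ℚ) < (n:ℚ) := by exact_mod_cast hn
            positivity
          positivity
      intro h
      rw [hSd] at h
      rw [h, mul_zero] at hpos'
      exact lt_irrefl 0 hpos'
    · exact absurd hzero hs_ne
    · -- s > 0 : then s ≥ 4, realize x,y as real numbers, all terms positive
      have hdpos : 0 < (a:ℚ) * ((p:ℚ) - (a:ℚ)) := by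
        by_contra hd
        push_neg at hd
        have : s ≤ 0 := by
          rw [hsdef]
          apply div_nonpos_of_nonneg_of_nonpos (by positivity) hd
        linarith
      have h4 : (4:ℚ) ≤ s := by
        rw [hsdef, le_div_iff₀ hdpos]
        nlinarith [sq_nonneg ((p:ℚ) - 2*(a:ℚ))]
      have h4R : (4:ℝ) ≤ (s:ℝ) := by exact_mod_cast h4
      set sR : ℝ := (s:ℝ) with hsR
      have hX : (0:ℝ) ≤ sR^2 - 4*sR := by nlinarith
      set w : ℝ := Real.sqrt (sR^2 - 4*sR) with hw
      have hw0 : 0 ≤ w := Real.sqrt_nonneg _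
      have hsq : w^2 = sR^2 - 4*sR := Real.sq_sqrt hX
      set u : ℝ := (sR + w)/2 with hu
      set v : ℝ := (sR - w)/2 with hv
      have h1R : u + v = sR := by rw [hu, hv]; ring
      have h2R : u * v = sR := by
        have : u*v = (sR^2 - w^2)/4 := by rw [hu, hv]; ring
        rw [this, hsq]; ring
      have hwlt : w < sR := by
        have h1' : sR^2 - 4*sR < sR^2 := by nlinarith
        have := Real.sqrt_lt_sqrt hX h1'
        rwa [Real.sqrt_sq (by linarith : (0:ℝ) ≤ sR)] at this
      have hupos : 0 < u := by rw [hu]; linarith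
      have hvpos : 0 < v := by rw [hv]; linarith
      have hBR := lemB h1R h2R n hn
      have hcast : ((S:ℚ):ℝ) = ∑ j ∈ range (n+1), dd ℝ n j * sR^j := by
        rw [hSd]
        push_cast
        apply Finset.sum_congr rfl
        intro j _
        rw [dd_rat_cast]
      have hposR : (0:ℝ) < ((S:ℚ):ℝ) := by
        rw [hcast, ← hBR]
        apply Finset.sum_pos
        · intro k hk
          have hk1 : 1 ≤ k := (Finset.mem_Icc.mp hk).1
          have : (0:ℝ) < (k:ℝ) := by exact_mod_cast hk1
          have hu' : (0:ℝ) < u^k := pow_pos hupos k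
          have hv' : (0:ℝ) < v^k := pow_pos hvpos k
          positivity
        · exact Finset.nonempty_Icc.mpr hn
      intro h
      rw [h] at hposR
      norm_num at hposR
  -- p-adic valuation of s
  have hnd : ¬ (p:ℤ) ∣ a * ((p:ℤ) - a) := by
    intro hdvd
    rcases (Nat.prime_iff_prime_int.mp hp).dvd_mul.mp hdvd with h | h
    · exact ha h
    · exact ha (by
        have : (p:ℤ) ∣ (p:ℤ) - ((p:ℤ) - a) := dvd_sub dvd_rfl h
        simpa using this)
  have hDne : a * ((p:ℤ) - a) ≠ 0 := mul_ne_zero haZ hbZ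
  have hDcast : ((a*((p:ℤ)-a) : ℤ) : ℚ) = (a:ℚ) * ((p:ℚ) - (a:ℚ)) := by push_cast; ring
  have hvs : padicValRat p s = 2 := by
    rw [hsdef, ← hDcast,
      padicValRat.div (pow_ne_zero _ hpQ) (Int.cast_ne_zero.mpr hDne),
      padicValRat.pow _, padicValRat.self hp1,
      padicValRat.of_int, padicValInt.eq_zero_of_not_dvd hnd]
    ring
  -- per-term valuation bound
  set L : ℝ := ((n : ℝ) + 1) - Real.logb p (((n : ℝ) + 1) / 2) with hL
  have hterm_val : ∀ j ∈ range (n+1), dd ℚ n j * s^j ≠ 0 →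
      (⌈L⌉ : ℤ) ≤ padicValRat p (dd ℚ n j * s^j) := by
    intro j hj hne
    have hjn : j ≤ n := by have := Finset.mem_range.mp hj; omega
    have hj1 : 1 ≤ j := by
      by_contra h0
      have : j = 0 := by omega
      rw [this, dd_zero, zero_mul] at hne
      exact hne rfl
    set C : ℕ := (j-1).choose (n-j) with hCdef
    have hC : C ≠ 0 := by
      intro h0
      apply hne
      rw [dd, if_pos hjn, ← hCdef, h0]
      simp
    have h2j : n + 1 ≤ 2*j := by
      by_contra h0
      apply hC
      rw [hCdef]
      exact Nat.choose_eq_zero_of_lt (by omega)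
    have hCQ : ((C:ℕ):ℚ) ≠ 0 := Nat.cast_ne_zero.mpr hC
    have hjQ : ((j:ℕ):ℚ) ≠ 0 := Nat.cast_ne_zero.mpr (by omega)
    have hdd : dd ℚ n j = (-1)^(n-j) * ((C:ℚ)/(j:ℚ)) := by
      rw [dd, if_pos hjn]
    have hval1 : padicValRat p (dd ℚ n j * s^j)
        = padicValRat p (((C:ℚ)/(j:ℚ)) * s^j) := by
      rcases neg_one_pow_eq_or ℚ (n-j) with h | h
      · rw [hdd, h, one_mul]
      · rw [hdd, h,
          show (-1 : ℚ) * ((C:ℚ)/(j:ℚ)) * s^j = -(((C:ℚ)/(j:ℚ)) * s^j) from by ring,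
          padicValRat.neg]
    have hval2 : padicValRat p (((C:ℚ)/(j:ℚ)) * s^j)
        = (padicValNat p C : ℤ) - (padicValNat p j : ℤ) + (j:ℤ) * 2 := by
      rw [padicValRat.mul (div_ne_zero hCQ hjQ) (pow_ne_zero _ hs_ne),
        padicValRat.div hCQ hjQ, padicValRat.pow _, hvs,
        padicValRat.of_nat, padicValRat.of_nat]
    have hre := real_ineq hp1 hn hj1 h2j
    have hceil : (⌈L⌉ : ℤ) ≤ 2*(j:ℤ) - (padicValNat p j : ℤ) := by
      apply Int.ceil_le.mpr
      rw [hL]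
      push_cast
      rw [padicValRat.of_nat]
      exact_mod_cast hre
    have hCnn : (0:ℤ) ≤ (padicValNat p C : ℤ) := Int.ofNat_nonneg _
    rw [hval1, hval2]
    omega
  have hfin : (⌈L⌉ : ℤ) ≤ padicValRat p S := by
    rw [hSd]
    refine val_sum_ge _ _ _ hterm_val ?_
    rw [← hSd]; exact hSne
  calc L ≤ (⌈L⌉ : ℝ) := Int.le_ceil L
    _ ≤ (padicValRat p S : ℝ) := by exact_mod_cast hfin
end

section
/- Let p be a prime, (r_n)_{n≥1} a sequence of nonzero rational numbers whose partial sums s_n are nonzero with (v_p(s_n))_{n≥1} unbounded from above, and (ℓ_k)_{k≥2} a strictly increasing real sequence with ℓ_k ≤ v_p(r_k) for all k ≥ 2. Then for every positive integer n: v_p(s_n) ≥ ℓ_{n+1}, and equality v_p(s_n) = ℓ_{n+1} holds if and only if inf_{k ≥ n+1} v_p(r_k) = ℓ_{n+1}. -/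
private lemma val_sum_ge_s3 (p : ℕ) [Fact p.Prime] (r : ℕ → ℚ) (c : ℝ) (F : Finset ℕ)
    (hv : ∀ k ∈ F, c ≤ (padicValRat p (r k) : ℝ))
    (hne : (∑ k ∈ F, r k) ≠ 0) : c ≤ (padicValRat p (∑ k ∈ F, r k) : ℝ) := by
  classical
  induction F using Finset.induction_on with
  | empty => simp at hne
  | insert _ _ ha ih =>
    rename_i a F
    rw [Finset.sum_insert ha] at hne ⊢
    by_cases h : (∑ k ∈ F, r k) = 0
    · rw [h, add_zero] at hne ⊢
      exact hv a (Finset.mem_insert_self a F)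
    · have hmin := padicValRat.min_le_padicValRat_add (p := p) hne
      have h1 : c ≤ (padicValRat p (r a) : ℝ) := hv a (Finset.mem_insert_self a F)
      have h2 : c ≤ (padicValRat p (∑ k ∈ F, r k) : ℝ) :=
        ih (fun k hk => hv k (Finset.mem_insert_of_mem hk)) h
      have : c ≤ ((min (padicValRat p (r a)) (padicValRat p (∑ k ∈ F, r k)) : ℤ) : ℝ) := by
        push_cast; exact le_min h1 h2
      exact this.trans (by exact_mod_cast hmin)

private lemma lb_aux (p : ℕ) [Fact p.Prime] (r : ℕ → ℚ) (hr : ∀ k, 1 ≤ k → r k ≠ 0)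
    (hs : ∀ n, 1 ≤ n → (∑ k ∈ Finset.Icc 1 n, r k) ≠ 0)
    (hub : ∀ M : ℤ, ∃ n, 1 ≤ n ∧ M < padicValRat p (∑ k ∈ Finset.Icc 1 n, r k))
    (ℓ : ℕ → ℝ) (hℓmono : StrictMonoOn ℓ {k : ℕ | 2 ≤ k})
    (hℓ : ∀ k, 2 ≤ k → ℓ k ≤ (padicValRat p (r k) : ℝ))
    (n : ℕ) (hn : 1 ≤ n) :
    ℓ (n + 1) ≤ (padicValRat p (∑ k ∈ Finset.Icc 1 n, r k) : ℝ) := by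
  have hne : (Finset.Icc 1 n).Nonempty := Finset.nonempty_Icc.mpr hn
  set M : ℤ := (Finset.Icc 1 n).sup' hne
    (fun j => padicValRat p (∑ k ∈ Finset.Icc 1 j, r k)) with hM
  obtain ⟨m, hm1, hmv⟩ := hub M
  have hsnM : padicValRat p (∑ k ∈ Finset.Icc 1 n, r k) ≤ M := by
    rw [hM]
    exact Finset.le_sup' (fun j => padicValRat p (∑ k ∈ Finset.Icc 1 j, r k))
      (Finset.mem_Icc.mpr ⟨hn, le_refl n⟩)
  have hnm : n < m := by
    by_contra hle
    push_neg at hle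
    have : padicValRat p (∑ k ∈ Finset.Icc 1 m, r k) ≤ M := by
      rw [hM]
      exact Finset.le_sup' (fun j => padicValRat p (∑ k ∈ Finset.Icc 1 j, r k))
        (Finset.mem_Icc.mpr ⟨hm1, hle⟩)
    omega
  -- split the sum
  have hsplit : (∑ k ∈ Finset.Icc 1 n, r k) + (∑ k ∈ Finset.Icc (n+1) m, r k)
      = ∑ k ∈ Finset.Icc 1 m, r k := by
    rw [show Finset.Icc 1 n = Finset.Ioc 0 n from (Finset.Icc_add_one_left_eq_Ioc 0 n).symm,
        show Finset.Icc (n+1) m = Finset.Ioc n m from Finset.Icc_add_one_left_eq_Ioc n m,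
        show Finset.Icc 1 m = Finset.Ioc 0 m from (Finset.Icc_add_one_left_eq_Ioc 0 m).symm]
    exact Finset.sum_Ioc_consecutive _ (Nat.zero_le n) (le_of_lt hnm)
  set t := ∑ k ∈ Finset.Icc (n+1) m, r k with htdef
  have ht0 : t ≠ 0 := by
    intro h
    rw [h, add_zero] at hsplit
    rw [hsplit] at hsnM
    omega
  have htv : ℓ (n+1) ≤ (padicValRat p t : ℝ) := by
    apply val_sum_ge_s3
    · intro k hk
      rw [Finset.mem_Icc] at hk
      have h2k : 2 ≤ k := by omega
      have : ℓ (n+1) ≤ ℓ k := by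
        rcases eq_or_lt_of_le hk.1 with h | h
        · rw [h]
        · exact le_of_lt (hℓmono (by simp only [Set.mem_setOf_eq]; omega) (by simpa using h2k) h)
      exact this.trans (hℓ k h2k)
    · exact ht0
  -- ultrametric: s n = s m - t
  have hsn0 := hs n hn
  have hsm : (∑ k ∈ Finset.Icc 1 m, r k) + (-t) = ∑ k ∈ Finset.Icc 1 n, r k := by
    rw [← hsplit]; ring
  have hmin := padicValRat.min_le_padicValRat_add (p := p)
    (q := ∑ k ∈ Finset.Icc 1 m, r k) (r := -t) (by rw [hsm]; exact hsn0)
  rw [hsm, padicValRat.neg] at hmin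
  have hfin : padicValRat p t ≤ padicValRat p (∑ k ∈ Finset.Icc 1 n, r k) := by
    rcases le_or_gt (padicValRat p (∑ k ∈ Finset.Icc 1 m, r k)) (padicValRat p t) with h | h
    · omega
    · rw [min_eq_right (le_of_lt h)] at hmin; exact hmin
  exact htv.trans (by exact_mod_cast hfin)

/-- Lower bound `v_p(s_n) ≥ ℓ_{n+1}` and the equality criterion
`v_p(s_n) = ℓ_{n+1} ↔ inf_{k ≥ n+1} v_p(r_k) = ℓ_{n+1}`. -/
theorem stmt3 (p : ℕ) (hp : p.Prime) (r : ℕ → ℚ) (hr : ∀ k, 1 ≤ k → r k ≠ 0)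
    (hs : ∀ n, 1 ≤ n → (∑ k ∈ Finset.Icc 1 n, r k) ≠ 0)
    (hub : ∀ M : ℤ, ∃ n, 1 ≤ n ∧ M < padicValRat p (∑ k ∈ Finset.Icc 1 n, r k))
    (ℓ : ℕ → ℝ) (hℓmono : StrictMonoOn ℓ {k : ℕ | 2 ≤ k})
    (hℓ : ∀ k, 2 ≤ k → ℓ k ≤ (padicValRat p (r k) : ℝ))
    (n : ℕ) (hn : 1 ≤ n) :
    ℓ (n + 1) ≤ (padicValRat p (∑ k ∈ Finset.Icc 1 n, r k) : ℝ) ∧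
      ((padicValRat p (∑ k ∈ Finset.Icc 1 n, r k) : ℝ) = ℓ (n + 1) ↔
        sInf ((fun k => (padicValRat p (r k) : ℝ)) '' {k : ℕ | n + 1 ≤ k}) = ℓ (n + 1)) := by
  haveI : Fact p.Prime := ⟨hp⟩
  have hlb := lb_aux p r hr hs hub ℓ hℓmono hℓ n hn
  have hlb1 := lb_aux p r hr hs hub ℓ hℓmono hℓ (n+1) (by omega)
  have hstep : (∑ k ∈ Finset.Icc 1 (n+1), r k)
      = (∑ k ∈ Finset.Icc 1 n, r k) + r (n+1) :=
    Finset.sum_Icc_succ_top (by omega) r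
  have hstrict : ℓ (n+1) < ℓ (n+2) :=
    hℓmono (by simp only [Set.mem_setOf_eq]; omega) (by simp only [Set.mem_setOf_eq]; omega) (by omega)
  have hrl : ℓ (n+1) ≤ (padicValRat p (r (n+1)) : ℝ) := hℓ (n+1) (by omega)
  have hsn0 := hs n hn
  have hsn10 := hs (n+1) (by omega)
  have hr10 := hr (n+1) (by omega)
  -- core: v(s n) = ℓ(n+1) ↔ v(r (n+1)) = ℓ(n+1)
  have core : (padicValRat p (∑ k ∈ Finset.Icc 1 n, r k) : ℝ) = ℓ (n + 1) ↔
      (padicValRat p (r (n+1)) : ℝ) = ℓ (n + 1) := by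
    constructor
    · intro h
      by_contra hne
      have hlt : (padicValRat p (∑ k ∈ Finset.Icc 1 n, r k) : ℝ)
          < (padicValRat p (r (n+1)) : ℝ) := by
        rw [h]; exact lt_of_le_of_ne hrl (Ne.symm hne)
      have hltZ : padicValRat p (∑ k ∈ Finset.Icc 1 n, r k) < padicValRat p (r (n+1)) := by
        exact_mod_cast hlt
      have heq : padicValRat p (∑ k ∈ Finset.Icc 1 (n+1), r k)
          = padicValRat p (∑ k ∈ Finset.Icc 1 n, r k) := by
        rw [hstep]
        exact padicValRat.add_eq_of_lt (p := p) (by rw [← hstep]; exact hsn10) hsn0 hr10 hltZ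
      rw [heq, h] at hlb1
      exact absurd (lt_of_lt_of_le hstrict hlb1) (lt_irrefl _)
    · intro h
      by_contra hne
      have hlt : (padicValRat p (r (n+1)) : ℝ)
          < (padicValRat p (∑ k ∈ Finset.Icc 1 n, r k) : ℝ) := by
        rw [h]; exact lt_of_le_of_ne hlb (Ne.symm hne)
      have hltZ : padicValRat p (r (n+1)) < padicValRat p (∑ k ∈ Finset.Icc 1 n, r k) := by
        exact_mod_cast hlt
      have heq : padicValRat p (∑ k ∈ Finset.Icc 1 (n+1), r k)
          = padicValRat p (r (n+1)) := by
        rw [hstep, add_comm]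
        exact padicValRat.add_eq_of_lt (p := p)
          (by rw [add_comm, ← hstep]; exact hsn10) hr10 hsn0 hltZ
      rw [heq, h] at hlb1
      exact absurd (lt_of_lt_of_le hstrict hlb1) (lt_irrefl _)
  -- inf criterion
  set S := (fun k => (padicValRat p (r k) : ℝ)) '' {k : ℕ | n + 1 ≤ k} with hS
  have hSne : S.Nonempty := ⟨_, ⟨n+1, by simp, rfl⟩⟩
  have hbd : ∀ x ∈ S, ℓ (n+1) ≤ x := by
    rintro x ⟨k, hk, rfl⟩
    have hk' : n + 1 ≤ k := hk
    have h2k : 2 ≤ k := by omega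
    have : ℓ (n+1) ≤ ℓ k := by
      rcases eq_or_lt_of_le hk' with h | h
      · rw [h]
      · exact le_of_lt (hℓmono (by simp only [Set.mem_setOf_eq]; omega) (by simpa using h2k) h)
    exact this.trans (hℓ k h2k)
  have infiff : sInf S = ℓ (n+1) ↔ (padicValRat p (r (n+1)) : ℝ) = ℓ (n + 1) := by
    constructor
    · intro hinf
      by_contra hne
      have hlt : ℓ (n+1) < (padicValRat p (r (n+1)) : ℝ) := lt_of_le_of_ne hrl (Ne.symm hne)
      set b : ℝ := min ((padicValRat p (r (n+1)) : ℝ)) (ℓ (n+2)) with hb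
      have hbgt : ℓ (n+1) < b := lt_min hlt hstrict
      have hble : ∀ x ∈ S, b ≤ x := by
        rintro x ⟨k, hk, rfl⟩
        have hk' : n + 1 ≤ k := hk
        rcases eq_or_lt_of_le hk' with h | h
        · rw [← h]; exact min_le_left _ _
        · have h2 : n + 2 ≤ k := h
          have : ℓ (n+2) ≤ ℓ k := by
            rcases eq_or_lt_of_le h2 with h' | h'
            · rw [h']
            · exact le_of_lt (hℓmono (by simp only [Set.mem_setOf_eq]; omega) (by simp only [Set.mem_setOf_eq]; omega) h')
          exact (min_le_right _ _).trans (this.trans (hℓ k (by omega)))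
      have : b ≤ sInf S := le_csInf hSne hble
      rw [hinf] at this
      exact absurd (lt_of_lt_of_le hbgt this) (lt_irrefl _)
    · intro h
      refine le_antisymm ?_ (le_csInf hSne hbd)
      have hmem : (padicValRat p (r (n+1)) : ℝ) ∈ S := ⟨n+1, by simp, rfl⟩
      calc sInf S ≤ (padicValRat p (r (n+1)) : ℝ) :=
            csInf_le ⟨ℓ (n+1), fun x hx => hbd x hx⟩ hmem
        _ = ℓ (n+1) := h
  exact ⟨hlb, core.trans infiff.symm⟩
end

section
/- Let p be a prime and a an integer not divisible by p. Then for every positive integer n, v_p(Σ_{k=1}^{n} (1/a^k + 1/(p-a)^k) · p^k/k) ≥ n + 1 - ⌊log_p(n)⌋. -/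
open Finset


def stmt5co (n j : ℕ) : ℚ := (-1:ℚ)^(n-j) * ((n:ℚ)/(j:ℚ)) * (j.choose (n-j) : ℚ)

def stmt5c2 (n j : ℕ) : ℚ := (-1:ℚ)^(n-j) * ((j-1).choose (n-j) : ℚ)

lemma stmt5core (q s : ℕ) :
    ((q:ℚ)+s+3)/((q:ℚ)+2) * ((q+2).choose (s+1) : ℚ)
      = ((q:ℚ)+s+2)/((q:ℚ)+1) * ((q+1).choose (s+1) : ℚ)
        + ((q:ℚ)+s+1)/((q:ℚ)+1) * ((q+1).choose s : ℚ) := by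
  rcases le_or_gt s (q+1) with hs | hs
  · obtain ⟨d, hd⟩ : ∃ d, q + 1 = s + d := ⟨q+1-s, by omega⟩
    have hA : ((q+2).choose (s+1) : ℚ) = (q+1).choose s + (q+1).choose (s+1) := by
      exact_mod_cast congrArg (Nat.cast : ℕ → ℚ) (Nat.choose_succ_succ (q+1) s)
    have hB0 : (q+1).choose (s+1) * (s+1) = (q+1).choose s * d := by
      have := Nat.choose_succ_right_eq (q+1) s
      rwa [show q + 1 - s = d by omega] at this
    have hB : ((q+1).choose (s+1) : ℚ) * ((s:ℚ)+1) = ((q+1).choose s : ℚ) * (d:ℚ) := by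
      exact_mod_cast congrArg (Nat.cast : ℕ → ℚ) hB0
    have hd' : (q:ℚ) + 1 = (s:ℚ) + (d:ℚ) := by exact_mod_cast congrArg (Nat.cast : ℕ → ℚ) hd
    have h1 : ((q:ℚ)+1) ≠ 0 := by positivity
    have h2 : ((q:ℚ)+2) ≠ 0 := by positivity
    field_simp
    linear_combination (((q:ℚ)+s+3) * ((q:ℚ)+1)) * hA - ((q:ℚ)+2) * hB + ((q:ℚ)+1) * hB
      + (((q+1).choose s : ℚ)) * hd'
  · have e1 : (q+2).choose (s+1) = 0 := Nat.choose_eq_zero_of_lt (by omega)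
    have e2 : (q+1).choose (s+1) = 0 := Nat.choose_eq_zero_of_lt (by omega)
    have e3 : (q+1).choose s = 0 := Nat.choose_eq_zero_of_lt (by omega)
    simp [e1, e2, e3]

lemma stmt5corec (n i : ℕ) (hi : i ≤ n) :
    stmt5co (n+3) (i+2) = stmt5co (n+2) (i+1) - stmt5co (n+1) (i+1) := by
  obtain ⟨r, rfl⟩ : ∃ r, n = i + r := ⟨n - i, by omega⟩
  simp only [stmt5co]
  rw [show i + r + 3 - (i + 2) = r + 1 by omega, show i + r + 2 - (i + 1) = r + 1 by omega,
    show i + r + 1 - (i + 1) = r by omega]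
  have hsign : (-1:ℚ)^(r+1) = -(-1:ℚ)^r := by rw [pow_succ]; ring
  have := stmt5core i r
  push_cast at this ⊢
  rw [hsign]
  linear_combination (-(-1:ℚ)^r) * this

lemma stmt5powsum (x y : ℚ) (h : x * y = x + y) :
    ∀ n : ℕ, x^(n+1) + y^(n+1)
      = ∑ i ∈ range (n+1), stmt5co (n+1) (i+1) * (x*y)^(i+1) := by
  intro n
  induction n using Nat.twoStepInduction with
  | zero => simp [stmt5co]; linarith [h]
  | one =>
    norm_num [stmt5co, Finset.sum_range_succ]
    linear_combination (-(x+y+x*y)) * h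
  | more n IH0 IH1 =>
    have key : x^(n+3) + y^(n+3)
        = (x*y) * (x^(n+2) + y^(n+2)) - (x*y) * (x^(n+1) + y^(n+1)) := by
      linear_combination (-(x^(n+2)) - y^(n+2)) * h
    rw [key, IH1, IH0, Finset.mul_sum, Finset.mul_sum]
    rw [Finset.sum_range_succ' (fun i => stmt5co (n+3) (i+1) * (x*y)^(i+1)) (n+2)]
    have h0 : stmt5co (n+3) 1 * (x*y)^1 = 0 := by
      simp only [stmt5co]
      rw [show n + 3 - 1 = n + 2 by omega, Nat.choose_eq_zero_of_lt (show 1 < n + 2 by omega)]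
      simp
    rw [h0, add_zero]
    rw [Finset.sum_range_succ (fun i => stmt5co (n+3) (i+1+1) * (x*y)^(i+1+1)) (n+1)]
    rw [Finset.sum_range_succ (fun i => x*y*(stmt5co (n+2) (i+1) * (x*y)^(i+1))) (n+1)]
    have htop : stmt5co (n+3) (n+3) * (x*y)^(n+3)
        = x*y*(stmt5co (n+2) (n+2) * (x*y)^(n+2)) := by
      have c1 : stmt5co (n+3) (n+3) = 1 := by
        simp [stmt5co, Nat.sub_self]
        exact_mod_cast (by omega : n + 3 ≠ 0)
      have c2 : stmt5co (n+2) (n+2) = 1 := by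
        simp [stmt5co, Nat.sub_self]
        exact_mod_cast (by omega : n + 2 ≠ 0)
      rw [c1, c2]; ring
    have hterms : ∀ i ∈ range (n+1), stmt5co (n+3) (i+1+1) * (x*y)^(i+1+1)
        = x*y*(stmt5co (n+2) (i+1) * (x*y)^(i+1)) - x*y*(stmt5co (n+1) (i+1) * (x*y)^(i+1)) := by
      intro i hi
      rw [stmt5corec n i (by simpa using Nat.lt_succ_iff.mp (Finset.mem_range.mp hi))]
      ring
    rw [Finset.sum_congr rfl hterms, Finset.sum_sub_distrib,
      show n + 1 + 1 + 1 = n + 3 by omega, htop]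
    ring

lemma stmt5shift (f : ℕ → ℚ) (n : ℕ) : ∑ i ∈ range n, f (i+1) = ∑ j ∈ Icc 1 n, f j := by
  induction n with
  | zero => simp
  | succ n ih => rw [Finset.sum_range_succ, ih, Finset.sum_Icc_succ_top (by omega)]

lemma stmt5term (n m r : ℕ) (hn : n = m + 1 + r) :
    stmt5c2 (n+1) (m+1) * ((m:ℚ)+1)⁻¹ = stmt5c2 n (m+1) * ((m:ℚ)+1)⁻¹
      + stmt5co (n+1) (m+1) * ((n:ℚ)+1)⁻¹ := by
  subst hn
  simp only [stmt5c2, stmt5co]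
  rw [show m + 1 + r + 1 - (m + 1) = r + 1 by omega, show m + 1 + r - (m + 1) = r by omega,
    show m + 1 - 1 = m by omega]
  have hpas : ((m+1).choose (r+1) : ℚ) = m.choose r + m.choose (r+1) := by
    exact_mod_cast congrArg (Nat.cast : ℕ → ℚ) (Nat.choose_succ_succ m r)
  have h1 : ((m:ℚ)+1) ≠ 0 := by positivity
  have h2 : ((m:ℚ)+1+r+1) ≠ 0 := by positivity
  have hsign : (-1:ℚ)^(r+1) = -(-1:ℚ)^r := by rw [pow_succ]; ring
  rw [hsign]
  push_cast
  field_simp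
  rw [hpas]; ring

lemma stmt5sumform (x y : ℚ) (h : x * y = x + y) :
    ∀ n : ℕ, 1 ≤ n →
      ∑ k ∈ Icc 1 n, (x^k + y^k)/(k:ℚ) = ∑ j ∈ Icc 1 n, stmt5c2 n j * (x*y)^j / (j:ℚ) := by
  intro n hn
  induction n, hn using Nat.le_induction with
  | base => simp [stmt5c2]; linarith [h]
  | succ n hn ih =>
    rw [Finset.sum_Icc_succ_top (show 1 ≤ n+1 by omega), ih,
      Finset.sum_Icc_succ_top (show 1 ≤ n+1 by omega)]
    have hps := stmt5powsum x y h n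
    rw [stmt5shift (fun j => stmt5co (n+1) j * (x*y)^j) (n+1)] at hps
    rw [Finset.sum_Icc_succ_top (show 1 ≤ n+1 by omega)] at hps
    have expand : (x^(n+1) + y^(n+1))/((n:ℚ)+1)
        = (∑ j ∈ Icc 1 n, stmt5co (n+1) j * (x*y)^j * ((n:ℚ)+1)⁻¹)
          + stmt5co (n+1) (n+1) * (x*y)^(n+1) * ((n:ℚ)+1)⁻¹ := by
      rw [div_eq_mul_inv]
      push_cast at hps
      rw [hps, add_mul, Finset.sum_mul]
    push_cast
    rw [expand]
    have htopc : stmt5c2 (n+1) (n+1) = stmt5co (n+1) (n+1) := by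
      simp [stmt5c2, stmt5co, Nat.sub_self]
      rw [div_self (by positivity)]
    have hterms : ∀ j ∈ Icc 1 n,
        stmt5c2 (n+1) j * (x*y)^j / (j:ℚ)
          = stmt5c2 n j * (x*y)^j / (j:ℚ)
            + stmt5co (n+1) j * (x*y)^j * ((n:ℚ)+1)⁻¹ := by
      intro j hj
      rw [Finset.mem_Icc] at hj
      obtain ⟨m, rfl⟩ : ∃ m, j = m + 1 := ⟨j - 1, by omega⟩
      obtain ⟨r, hr⟩ : ∃ r, n = m + 1 + r := ⟨n - (m+1), by omega⟩
      have := stmt5term n m r hr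
      push_cast at this ⊢
      rw [div_eq_mul_inv, div_eq_mul_inv]
      calc stmt5c2 (n+1) (m+1) * (x*y)^(m+1) * ((m:ℚ)+1)⁻¹
          = (stmt5c2 n (m+1) * ((m:ℚ)+1)⁻¹ + stmt5co (n+1) (m+1) * ((n:ℚ)+1)⁻¹) * (x*y)^(m+1) := by
            rw [← this]; ring
        _ = _ := by ring
    rw [Finset.sum_congr rfl hterms, Finset.sum_add_distrib, htopc]
    ring

lemma stmt5valsum {p : ℕ} [Fact p.Prime] {F : ℕ → ℚ} {r : ℤ} :
    ∀ S : Finset ℕ, (∀ i ∈ S, F i ≠ 0 → r ≤ padicValRat p (F i)) →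
      (∑ i ∈ S, F i ≠ 0) → r ≤ padicValRat p (∑ i ∈ S, F i) := by
  intro S
  induction S using Finset.cons_induction with
  | empty => intro _ hne; simp at hne
  | cons a s ha ih =>
    intro h hne
    rw [Finset.sum_cons] at hne ⊢
    by_cases h0 : ∑ i ∈ s, F i = 0
    · rw [h0, add_zero] at hne ⊢
      exact h a (Finset.mem_cons_self a s) hne
    · by_cases hFa : F a = 0
      · rw [hFa, zero_add] at hne ⊢
        exact ih (fun i hi hFi => h i (Finset.mem_cons_of_mem hi) hFi) h0
      · refine le_trans (le_min (h a (Finset.mem_cons_self a s) hFa)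
          (ih (fun i hi hFi => h i (Finset.mem_cons_of_mem hi) hFi) h0)) ?_
        exact padicValRat.min_le_padicValRat_add hne

/-- The weaker lower bound `v_p(S_n) ≥ n + 1 - ⌊log_p n⌋`. -/
theorem stmt5 (p : ℕ) (hp : p.Prime) (a : ℤ) (ha : ¬ (p : ℤ) ∣ a) (n : ℕ) (hn : 1 ≤ n) :
    (n : ℤ) + 1 - (Nat.log p n : ℤ) ≤
      padicValRat p (∑ k ∈ Finset.Icc 1 n,
        (1 / (a : ℚ) ^ k + 1 / ((p : ℚ) - (a : ℚ)) ^ k) * (p : ℚ) ^ k / (k : ℚ)) := by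
  haveI : Fact p.Prime := ⟨hp⟩
  set b : ℤ := (p:ℤ) - a with hbdef
  have hb : ¬ (p:ℤ) ∣ b := by
    intro hdvd
    have h2 := dvd_sub (dvd_refl (p:ℤ)) hdvd
    rw [hbdef, sub_sub_cancel] at h2
    exact ha h2
  have haz : a ≠ 0 := by rintro rfl; exact ha (dvd_zero _)
  have hbz : b ≠ 0 := by rintro h0; rw [h0] at hb; exact hb (dvd_zero _)
  have ha0 : (a:ℚ) ≠ 0 := Int.cast_ne_zero.mpr haz
  have hb0 : (b:ℚ) ≠ 0 := Int.cast_ne_zero.mpr hbz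
  have hp0 : (p:ℚ) ≠ 0 := Nat.cast_ne_zero.mpr hp.ne_zero
  have hbq : (b:ℚ) = (p:ℚ) - (a:ℚ) := by rw [hbdef]; push_cast; ring
  set x : ℚ := (p:ℚ)/(a:ℚ) with hxdef
  set y : ℚ := (p:ℚ)/(b:ℚ) with hydef
  have hx0 : x ≠ 0 := div_ne_zero hp0 ha0
  have hy0 : y ≠ 0 := div_ne_zero hp0 hb0
  have ht0 : x*y ≠ 0 := mul_ne_zero hx0 hy0
  have hxy : x * y = x + y := by
    rw [hxdef, hydef]
    field_simp
    linear_combination (-1:ℚ) * hbq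
  have hsum : ∀ k ∈ Icc 1 n,
      (1/(a:ℚ)^k + 1/((p:ℚ)-(a:ℚ))^k) * (p:ℚ)^k / (k:ℚ) = (x^k + y^k)/(k:ℚ) := by
    intro k _
    have h1 : (1/(a:ℚ)^k + 1/((p:ℚ)-(a:ℚ))^k) * (p:ℚ)^k = x^k + y^k := by
      rw [← hbq, hxdef, hydef, div_pow, div_pow]
      field_simp
    rw [h1]
  rw [Finset.sum_congr rfl hsum, stmt5sumform x y hxy n hn]
  -- valuation of t = x*y
  have hab' : ¬ (p:ℤ) ∣ (a*b) := by
    intro hd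
    rcases (Nat.prime_iff_prime_int.mp hp).2.2 a b hd with h | h
    · exact ha h
    · exact hb h
  have habq0 : ((a*b : ℤ):ℚ) ≠ 0 := Int.cast_ne_zero.mpr (mul_ne_zero haz hbz)
  have htval : x*y = ((p:ℚ)*(p:ℚ))/(((a*b : ℤ) : ℚ)) := by
    rw [hxdef, hydef, div_mul_div_comm]
    push_cast
    ring
  have hvt : padicValRat p (x*y) = 2 := by
    rw [htval, padicValRat.div (mul_ne_zero hp0 hp0) habq0,
      padicValRat.mul hp0 hp0, padicValRat.self hp.one_lt, padicValRat.of_int,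
      padicValInt.eq_zero_of_not_dvd hab']
    norm_num
  -- nonzeroness of the sum
  have hne : ∑ j ∈ Icc 1 n, stmt5c2 n j * (x*y)^j / (j:ℚ) ≠ 0 := by
    rcases lt_or_gt_of_ne (mul_ne_zero haz hbz) with hneg | hpos
    · -- a*b < 0 : t < 0, all closed-form terms have sign (-1)^n
      have htneg : x*y < 0 := by
        rw [htval]
        apply div_neg_of_pos_of_neg
        · positivity
        · exact_mod_cast hneg
      have hterm : ∀ j ∈ Icc 1 n, 0 ≤ (-1:ℚ)^n * (stmt5c2 n j * (x*y)^j / (j:ℚ)) := by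
        intro j hj
        rw [Finset.mem_Icc] at hj
        have hsgn : (-1:ℚ)^n * (-1:ℚ)^(n-j) = (-1:ℚ)^j := by
          rw [← pow_add, show n + (n-j) = 2*(n-j) + j by omega, pow_add, pow_mul]
          norm_num
        have key : (-1:ℚ)^n * (stmt5c2 n j * (x*y)^j / (j:ℚ))
            = ((j-1).choose (n-j) : ℚ) * (-(x*y))^j / (j:ℚ) := by
          rw [stmt5c2, neg_pow (x*y)]
          linear_combination (((j-1).choose (n-j) : ℚ) * (x*y)^j / (j:ℚ)) * hsgn
        rw [key]
        have h1 : (0:ℚ) < (-(x*y))^j := pow_pos (by linarith) j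
        have h2 : (0:ℚ) < (j:ℚ) := by exact_mod_cast hj.1
        exact div_nonneg (mul_nonneg (Nat.cast_nonneg _) h1.le) h2.le
      have hlast : 0 < (-1:ℚ)^n * (stmt5c2 n n * (x*y)^n / (n:ℚ)) := by
        have hc : stmt5c2 n n = 1 := by simp [stmt5c2]
        have hkey : (-1:ℚ)^n * (stmt5c2 n n * (x*y)^n / (n:ℚ)) = (-(x*y))^n / (n:ℚ) := by
          rw [hc, neg_pow (x*y)]
          ring
        rw [hkey]
        have h1 : (0:ℚ) < (-(x*y))^n := pow_pos (by linarith) n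
        have h2 : (0:ℚ) < (n:ℚ) := by exact_mod_cast hn
        exact div_pos h1 h2
      have hpos' : 0 < ∑ j ∈ Icc 1 n, (-1:ℚ)^n * (stmt5c2 n j * (x*y)^j / (j:ℚ)) := by
        apply Finset.sum_pos' hterm
        exact ⟨n, Finset.mem_Icc.mpr ⟨hn, le_refl n⟩, hlast⟩
      rw [← Finset.mul_sum] at hpos'
      intro h0
      rw [h0, mul_zero] at hpos'
      exact lt_irrefl 0 hpos'
    · -- a*b > 0 : both positive, original terms positive
      have hab : 0 < a ∧ 0 < b := by
        rcases mul_pos_iff.mp hpos with h | h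
        · exact h
        · exfalso; have : a + b = (p:ℤ) := by rw [hbdef]; ring
          omega
      have hxpos : 0 < x := div_pos (by exact_mod_cast hp.pos) (by exact_mod_cast hab.1)
      have hypos : 0 < y := div_pos (by exact_mod_cast hp.pos) (by exact_mod_cast hab.2)
      rw [← stmt5sumform x y hxy n hn]
      have : 0 < ∑ k ∈ Icc 1 n, (x^k + y^k)/(k:ℚ) := by
        apply Finset.sum_pos
        · intro k hk
          rw [Finset.mem_Icc] at hk
          have : (0:ℚ) < (k:ℚ) := by exact_mod_cast hk.1
          positivity
        · exact ⟨1, Finset.mem_Icc.mpr ⟨le_refl 1, hn⟩⟩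
      exact ne_of_gt this
  -- apply the valuation bound
  apply stmt5valsum _ _ hne
  intro j hj hFj
  rw [Finset.mem_Icc] at hj
  have hC : ((j-1).choose (n-j) : ℚ) ≠ 0 := by
    intro hC0
    exact hFj (by rw [stmt5c2, hC0]; simp)
  have hCnat : (j-1).choose (n-j) ≠ 0 := by exact_mod_cast hC
  have h2j : n + 1 ≤ 2*j := by
    by_contra hcon
    exact hCnat (Nat.choose_eq_zero_of_lt (by omega))
  have hc20 : stmt5c2 n j ≠ 0 := by
    rw [stmt5c2]
    exact mul_ne_zero (pow_ne_zero _ (by norm_num)) hC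
  have hjQ : ((j:ℚ)) ≠ 0 := by
    have : 0 < j := hj.1
    exact_mod_cast this.ne'
  rw [padicValRat.div (mul_ne_zero hc20 (pow_ne_zero _ ht0)) hjQ,
    padicValRat.mul hc20 (pow_ne_zero _ ht0), padicValRat.pow (x*y), hvt]
  have hvc2 : 0 ≤ padicValRat p (stmt5c2 n j) := by
    rw [stmt5c2]
    rcases Nat.even_or_odd (n-j) with he | ho
    · rw [he.neg_one_pow, one_mul, padicValRat.of_nat]
      exact Int.ofNat_nonneg _
    · rw [ho.neg_one_pow, neg_one_mul, padicValRat.neg, padicValRat.of_nat]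
      exact Int.ofNat_nonneg _
  have hvj : padicValRat p (j:ℚ) ≤ (Nat.log p n : ℤ) := by
    rw [padicValRat.of_nat]
    exact_mod_cast le_trans (padicValNat_le_nat_log j) (Nat.log_mono_right hj.2)
  have h2j' : (n:ℤ) + 1 ≤ 2*(j:ℤ) := by exact_mod_cast h2j
  have : padicValRat p (j:ℚ) ≤ (Nat.log p n : ℤ) := hvj
  push_cast
  linarith
end

section
/- For any nonzero real numbers x, y with x + y ≠ 0 and any nonnegative integer n: Σ_{k=0}^{n} x^k y^{n-k} / C(n,k) = (n+1) / [(x+y)(1/x + 1/y)^{n+1}] · Σ_{k=1}^{n+1} (x^k + y^k)(1/x + 1/y)^k / k. -/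
lemma pointw (x y : ℝ) (n k : ℕ) (hk : k ≤ n) :
    x ^ k * y ^ (n - k) / (n.choose k : ℝ) * ((n : ℝ) + 2) =
      ((n : ℝ) + 1) * (x ^ k * y ^ (n - k) / ((n+1).choose k : ℝ)
        + x ^ k * y ^ (n - k) / ((n+1).choose (k+1) : ℝ)) := by
  have ha : ((n.choose k : ℝ)) ≠ 0 := by
    exact_mod_cast (Nat.choose_pos hk).ne'
  have hb : (((n+1).choose k : ℝ)) ≠ 0 := by
    exact_mod_cast (Nat.choose_pos (hk.trans (Nat.le_succ n))).ne'
  have hc : (((n+1).choose (k+1) : ℝ)) ≠ 0 := by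
    exact_mod_cast (Nat.choose_pos (Nat.succ_le_succ hk)).ne'
  have h1 : ((n : ℝ) + 1) * (n.choose k : ℝ) = ((n+1).choose (k+1) : ℝ) * ((k : ℝ) + 1) := by
    exact_mod_cast congrArg (Nat.cast (R := ℝ)) (Nat.add_one_mul_choose_eq n k)
  have h2 : (n.choose k : ℝ) * ((n : ℝ) + 1) = ((n+1).choose k : ℝ) * ((n : ℝ) + 1 - (k : ℝ)) := by
    have := congrArg (Nat.cast (R := ℝ)) (Nat.choose_mul_succ_eq n k)
    push_cast [Nat.cast_sub (hk.trans (Nat.le_succ n))] at this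
    linarith [this]
  field_simp
  linear_combination (-x^k*y^(n-k)*(((n+1).choose (k+1) : ℝ))) * h2
    + (-x^k*y^(n-k)*(((n+1).choose k : ℝ))) * h1

lemma recc (x y : ℝ) (n : ℕ) :
    ((n:ℝ)+1) * (x+y) * (∑ k ∈ Finset.range (n + 1 + 1), x ^ k * y ^ (n + 1 - k) / ((n+1).choose k : ℝ)) =
      ((n:ℝ)+2) * (x*y) * (∑ k ∈ Finset.range (n + 1), x ^ k * y ^ (n - k) / (n.choose k : ℝ))
        + ((n:ℝ)+1) * (x^(n+2) + y^(n+2)) := by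
  set A1 := ∑ k ∈ Finset.range (n + 1 + 1), x ^ k * y ^ (n + 1 - k) / ((n+1).choose k : ℝ) with hA1
  set S1 := ∑ k ∈ Finset.range (n + 1), x ^ k * y ^ (n - k) / ((n+1).choose k : ℝ) with hS1def
  set S2 := ∑ k ∈ Finset.range (n + 1), x ^ k * y ^ (n - k) / ((n+1).choose (k+1) : ℝ) with hS2def
  have hA : ((n:ℝ)+2) * (∑ k ∈ Finset.range (n + 1), x ^ k * y ^ (n - k) / (n.choose k : ℝ))
      = ((n:ℝ)+1) * (S1 + S2) := by
    rw [hS1def, hS2def, ← Finset.sum_add_distrib, Finset.mul_sum, Finset.mul_sum]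
    refine Finset.sum_congr rfl fun k hk => ?_
    have hk' : k ≤ n := Nat.lt_succ_iff.mp (Finset.mem_range.mp hk)
    have := pointw x y n k hk'
    linarith [this]
  have hS1 : y * S1 = A1 - x^(n+1) := by
    rw [hA1, Finset.sum_range_succ]
    simp only [Nat.sub_self, pow_zero, Nat.choose_self, Nat.cast_one, mul_one, div_one]
    rw [hS1def, Finset.mul_sum]
    rw [add_sub_cancel_right]
    refine Finset.sum_congr rfl fun k hk => ?_
    have hk' : k ≤ n := Nat.lt_succ_iff.mp (Finset.mem_range.mp hk)
    have : n + 1 - k = (n - k) + 1 := by omega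
    rw [this, pow_succ]
    ring
  have hS2 : x * S2 = A1 - y^(n+1) := by
    rw [hA1, Finset.sum_range_succ']
    simp only [pow_zero, Nat.choose_zero_right, Nat.cast_one, one_mul, div_one, Nat.sub_zero]
    rw [hS2def, Finset.mul_sum]
    rw [add_sub_cancel_right]
    refine Finset.sum_congr rfl fun k hk => ?_
    have : n + 1 - (k + 1) = n - k := by omega
    rw [this, pow_succ]
    ring
  linear_combination (-(x*y))*hA - ((n:ℝ)+1)*x*hS1 - ((n:ℝ)+1)*y*hS2

/-- Mansour's combinatorial identity. -/
theorem stmt6 (x y : ℝ) (hx : x ≠ 0) (hy : y ≠ 0) (hxy : x + y ≠ 0) (n : ℕ) :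
    ∑ k ∈ Finset.range (n + 1), x ^ k * y ^ (n - k) / (n.choose k : ℝ) =
      ((n : ℝ) + 1) / ((x + y) * (1 / x + 1 / y) ^ (n + 1)) *
        ∑ k ∈ Finset.Icc 1 (n + 1), (x ^ k + y ^ k) * (1 / x + 1 / y) ^ k / (k : ℝ) := by
  have h : (1/x + 1/y : ℝ) = (x+y)/(x*y) := by
    field_simp
    ring
  have hs : (1/x + 1/y : ℝ) ≠ 0 := by
    rw [h]
    exact div_ne_zero hxy (mul_ne_zero hx hy)
  induction n with
  | zero =>
    simp only [Finset.range_one, Finset.sum_singleton, Finset.Icc_self, pow_zero, pow_one,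
      Nat.choose_self, Nat.cast_one, Nat.cast_zero, zero_add, Nat.zero_sub]
    rw [h]
    field_simp
  | succ n ih =>
    have hn1 : ((n:ℝ)+1) ≠ 0 := by positivity
    have hn2 : ((n:ℝ)+2) ≠ 0 := by positivity
    have hrec := recc x y n
    rw [Finset.sum_Icc_succ_top (by omega : 1 ≤ n + 1 + 1)]
    set T := ∑ k ∈ Finset.Icc 1 (n+1), (x ^ k + y ^ k) * (1 / x + 1 / y) ^ k / (k : ℝ) with hT
    set A0 := ∑ k ∈ Finset.range (n + 1), x ^ k * y ^ (n - k) / (n.choose k : ℝ) with hA0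
    set A1 := ∑ k ∈ Finset.range (n + 1 + 1), x ^ k * y ^ (n + 1 - k) / ((n+1).choose k : ℝ) with hA1d
    have hA1 : A1 = (((n:ℝ)+2)*(x*y)*A0 + ((n:ℝ)+1)*(x^(n+2)+y^(n+2))) / (((n:ℝ)+1)*(x+y)) := by
      rw [eq_div_iff (mul_ne_zero hn1 hxy)]
      linarith [hrec]
    rw [hA1, ih, h]
    push_cast
    rw [div_pow, div_pow]
    have hp1 : ((x+y):ℝ)^(n+1) ≠ 0 := pow_ne_zero _ hxy
    have hp2 : ((x*y):ℝ)^(n+1) ≠ 0 := pow_ne_zero _ (mul_ne_zero hx hy)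
    field_simp
    ring
end

section
/- For every nonnegative integer n: lcm{C(n,0), C(n,1), ..., C(n,n)} = lcm(1, 2, ..., n+1) / (n+1). -/
open Finset

private lemma key_fact {p m j : ℕ} (hp : p.Prime) (hj1 : 1 ≤ j) (hjm : j ≤ m) :
    (j * m.choose j).factorization p ≤ Nat.log p m := by
  have hj0 : j ≠ 0 := by omega
  have hm0 : m ≠ 0 := by omega
  have hc : 0 < m.choose j := Nat.choose_pos hjm
  rw [Nat.factorization_mul hj0 hc.ne', Finsupp.coe_add, Pi.add_apply]
  set f := j.factorization p with hf
  have hpf : p ^ f ∣ j := Nat.ordProj_dvd j p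
  have hfle : f ≤ Nat.log p m :=
    (Nat.le_log_iff_pow_le hp.one_lt hm0).mpr
      (le_trans (Nat.le_of_dvd (by omega) hpf) hjm)
  have hcb : (m.choose j).factorization p ≤ Nat.log p m - f := by
    rw [Nat.factorization_def _ hp, @padicValNat_def _ ⟨hp⟩ _ hc.ne',
      ← Nat.cast_le (α := ℕ∞), ← FiniteMultiplicity.emultiplicity_eq_multiplicity
        (Nat.finiteMultiplicity_iff.2 ⟨hp.ne_one, hc⟩)]
    rw [hp.emultiplicity_choose hjm (Nat.lt_succ_self _)]
    norm_cast
    calc ({i ∈ Finset.Ico 1 (Nat.log p m + 1) |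
            p ^ i ≤ j % p ^ i + (m - j) % p ^ i}).card
        ≤ (Finset.Ico (f + 1) (Nat.log p m + 1)).card := by
          apply Finset.card_le_card
          intro i hi
          simp only [Finset.mem_filter, Finset.mem_Ico] at hi ⊢
          obtain ⟨⟨h1, h2⟩, h3⟩ := hi
          refine ⟨?_, h2⟩
          by_contra h
          push_neg at h
          have hdvd : p ^ i ∣ j := dvd_trans (pow_dvd_pow p (by omega)) hpf
          have hmod : j % p ^ i = 0 := Nat.mod_eq_zero_of_dvd hdvd
          have := Nat.mod_lt (m - j) (pow_pos hp.pos i)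
          omega
      _ = Nat.log p m - f := by rw [Nat.card_Ico]; omega
  omega

private lemma mul_choose_dvd_lcm {m j : ℕ} (hj1 : 1 ≤ j) (hjm : j ≤ m) :
    j * m.choose j ∣ (Finset.Icc 1 m).lcm id := by
  have hm : 1 ≤ m := le_trans hj1 hjm
  have hL : (Finset.Icc 1 m).lcm id ≠ 0 := by
    rw [Ne, Finset.lcm_eq_zero_iff]
    rintro ⟨x, hx, hx0⟩
    simp only [Finset.mem_coe, Finset.mem_Icc] at hx
    simp only [id_eq] at hx0
    omega
  have hjc : j * m.choose j ≠ 0 :=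
    Nat.mul_ne_zero (by omega) (Nat.choose_pos hjm).ne'
  rw [← Nat.factorization_le_iff_dvd hjc hL, Finsupp.le_def]
  intro p
  by_cases hp : p.Prime
  · refine le_trans (key_fact hp hj1 hjm) ?_
    have hdvd : p ^ Nat.log p m ∣ (Finset.Icc 1 m).lcm id := by
      have hmem : p ^ Nat.log p m ∈ Finset.Icc 1 m := by
        rw [Finset.mem_Icc]
        exact ⟨Nat.one_le_pow _ _ hp.pos, Nat.pow_log_le_self p (by omega)⟩
      exact Finset.dvd_lcm hmem
    exact (Nat.Prime.pow_dvd_iff_le_factorization hp hL).mp hdvd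
  · simp [Nat.factorization_eq_zero_of_not_prime _ hp]

private lemma lcm_mul_left_nat {ι : Type*} [DecidableEq ι] {s : Finset ι} (hs : s.Nonempty) (c : ℕ)
    (f : ι → ℕ) : s.lcm (fun x => c * f x) = c * s.lcm f := by
  induction hs using Finset.Nonempty.cons_induction with
  | singleton a => simp
  | cons a s ha hs ih =>
    rw [Finset.cons_eq_insert, Finset.lcm_insert, Finset.lcm_insert, ih, lcm_mul_left]
    simp

/-- `lcm{C(n,0), …, C(n,n)} = lcm(1, …, n+1) / (n+1)`. -/
theorem stmt7 (n : ℕ) :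
    Finset.lcm (Finset.range (n + 1)) (fun k => n.choose k) =
      (Finset.lcm (Finset.Icc 1 (n + 1)) id) / (n + 1) := by
  have key : (n + 1) * Finset.lcm (Finset.range (n + 1)) (fun k => n.choose k) =
      (Finset.Icc 1 (n + 1)).lcm id := by
    rw [← lcm_mul_left_nat (Finset.nonempty_range_add_one) (n + 1) (fun k => n.choose k)]
    apply Nat.dvd_antisymm
    · apply Finset.lcm_dvd
      intro k hk
      rw [Finset.mem_range] at hk
      have h1 : (n + 1) * n.choose k = (k + 1) * (n + 1).choose (k + 1) := by
        rw [mul_comm (k + 1)]; exact Nat.add_one_mul_choose_eq n k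
      rw [h1]
      exact mul_choose_dvd_lcm (by omega) (by omega)
    · apply Finset.lcm_dvd
      intro j hj
      rw [Finset.mem_Icc] at hj
      have hj1 : j - 1 ∈ Finset.range (n + 1) := by
        rw [Finset.mem_range]; omega
      have hdvd : id j ∣ (n + 1) * n.choose (j - 1) := by
        have h1 : (n + 1) * n.choose (j - 1) = j * (n + 1).choose j := by
          have := Nat.add_one_mul_choose_eq n (j - 1)
          have hj' : j - 1 + 1 = j := by omega
          rw [this, hj', mul_comm]
        rw [h1]
        exact Dvd.intro _ rfl
      exact dvd_trans hdvd (Finset.dvd_lcm hj1)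
  rw [← key, Nat.mul_div_cancel_left _ (Nat.succ_pos n)]
end

section
/- Let p be a prime and a an integer not divisible by p. For every positive integer n: Σ_{k=1}^{n} (1/a^k + 1/(p-a)^k) · p^k/k = p^{n+1} / (n · (a(p-a))^n) · Σ_{k=0}^{n-1} a^k (p-a)^{n-1-k} / C(n-1, k). -/
open Finset

lemma choose_inv_add (m k : ℕ) (hk : k ≤ m) :
    1 / ((m+1).choose k : ℚ) + 1 / ((m+1).choose (k+1) : ℚ)
      = ((m:ℚ)+2) / ((m:ℚ)+1) / (m.choose k : ℚ) := by
  have h1 : (m+1).choose (k+1) * (k+1) = (m+1) * m.choose k := by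
    exact (Nat.add_one_mul_choose_eq m k).symm
  have h2 : (m+1).choose k * (m+1-k) = (m+1) * m.choose k := by
    rw [← Nat.choose_succ_right_eq]; exact h1
  have p0 : (0:ℚ) < (m.choose k : ℚ) := by exact_mod_cast Nat.choose_pos hk
  have p1 : (0:ℚ) < ((m+1).choose k : ℚ) := by
    exact_mod_cast Nat.choose_pos (by omega)
  have p2 : (0:ℚ) < ((m+1).choose (k+1) : ℚ) := by
    exact_mod_cast Nat.choose_pos (by omega)
  have h1' : ((m+1).choose (k+1) : ℚ) * ((k:ℚ)+1) = ((m:ℚ)+1) * (m.choose k : ℚ) := by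
    exact_mod_cast congrArg (Nat.cast : ℕ → ℚ) h1
  have h2' : ((m+1).choose k : ℚ) * ((m:ℚ)+1-(k:ℚ)) = ((m:ℚ)+1) * (m.choose k : ℚ) := by
    have := congrArg (Nat.cast : ℕ → ℚ) h2
    push_cast [Nat.cast_sub (by omega : k ≤ m+1)] at this
    linarith [this]
  field_simp
  linear_combination -(((m+1).choose (k+1) : ℚ) * h2' + ((m+1).choose k : ℚ) * h1')

lemma lemA_s8 (a b : ℚ) (m : ℕ) :
    (a+b) * ∑ k ∈ range (m+2), a^k * b^(m+1-k) / ((m+1).choose k : ℚ)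
      = a^(m+2) + b^(m+2) + (((m:ℚ)+2)/((m:ℚ)+1)) * (a*b) *
          ∑ k ∈ range (m+1), a^k * b^(m-k) / (m.choose k : ℚ) := by
  have e1 : (a+b) * ∑ k ∈ range (m+2), a^k * b^(m+1-k) / ((m+1).choose k : ℚ)
      = (∑ k ∈ range (m+2), a^(k+1) * b^(m+1-k) / ((m+1).choose k : ℚ))
        + (∑ k ∈ range (m+2), a^k * b^(m+1-k) * b / ((m+1).choose k : ℚ)) := by
    rw [add_mul, Finset.mul_sum, Finset.mul_sum]
    congr 1 <;> exact Finset.sum_congr rfl (fun k _ => by ring)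
  have eA : ∑ k ∈ range (m+2), a^(k+1) * b^(m+1-k) / ((m+1).choose k : ℚ)
      = (∑ k ∈ range (m+1), a^(k+1) * b^(m+1-k) / ((m+1).choose k : ℚ)) + a^(m+2) := by
    rw [Finset.sum_range_succ]
    simp
  have eB : ∑ k ∈ range (m+2), a^k * b^(m+1-k) * b / ((m+1).choose k : ℚ)
      = (∑ k ∈ range (m+1), a^(k+1) * b^(m+1-(k+1)) * b / ((m+1).choose (k+1) : ℚ)) + b^(m+2) := by
    rw [Finset.sum_range_succ']
    simp [pow_succ]
  rw [e1, eA, eB, Finset.mul_sum]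
  have ecomb : (∑ k ∈ range (m+1), a^(k+1) * b^(m+1-k) / ((m+1).choose k : ℚ)) +
      (∑ k ∈ range (m+1), a^(k+1) * b^(m+1-(k+1)) * b / ((m+1).choose (k+1) : ℚ))
      = ∑ k ∈ range (m+1), (a^(k+1) * b^(m+1-k) / ((m+1).choose k : ℚ)
          + a^(k+1) * b^(m+1-(k+1)) * b / ((m+1).choose (k+1) : ℚ)) := by
    rw [Finset.sum_add_distrib]
  have key : ∀ k ∈ range (m+1),
      a^(k+1) * b^(m+1-k) / ((m+1).choose k : ℚ)
        + a^(k+1) * b^(m+1-(k+1)) * b / ((m+1).choose (k+1) : ℚ)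
      = ((m:ℚ)+2)/((m:ℚ)+1) * (a*b) * (a^k * b^(m-k) / (m.choose k : ℚ)) := by
    intro k hk
    have hkm : k ≤ m := by have := Finset.mem_range.mp hk; omega
    have hb : m+1-k = (m-k)+1 := by omega
    have hbb : m+1-(k+1) = m-k := by omega
    have h := choose_inv_add m k hkm
    rw [hb, hbb, pow_succ]
    linear_combination (a^(k+1) * b^(m-k) * b) * h
  rw [Finset.sum_congr rfl key] at ecomb
  -- now finish
  linarith [ecomb]

lemma main' (A B : ℚ) (hA : A ≠ 0) (hB : B ≠ 0) (n : ℕ) (hn : 1 ≤ n) :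
    ∑ k ∈ Finset.Icc 1 n, (1/A^k + 1/B^k) * (A+B)^k / (k:ℚ)
      = (A+B)^(n+1) / ((n:ℚ) * (A*B)^n) *
          ∑ k ∈ Finset.range n, A^k * B^(n-1-k) / ((n-1).choose k : ℚ) := by
  induction n, hn using Nat.le_induction with
  | base =>
    simp only [Finset.Icc_self, Finset.sum_singleton, Finset.range_one, Nat.cast_one]
    simp
    field_simp
    ring
  | succ n hn ih =>
    obtain ⟨m, rfl⟩ : ∃ m, n = m+1 := ⟨n-1, by omega⟩
    rw [Finset.sum_Icc_succ_top (by omega : 1 ≤ m+1+1), ih]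
    simp only [Nat.add_sub_cancel] at *
    push_cast
    have hm1 : ((m:ℚ)+1) ≠ 0 := by positivity
    have hm2 : ((m:ℚ)+1+1) ≠ 0 := by positivity
    have hL := lemA_s8 A B m
    have hZ : (A+B)^(m+1+1+1) / (((m:ℚ)+1+1) * (A*B)^(m+1+1)) *
        ∑ k ∈ Finset.range (m+1+1), A^k * B^(m+1-k) / ((m+1).choose k : ℚ)
        = (A+B)^(m+2) / (((m:ℚ)+2) * (A*B)^(m+2)) *
          ((A+B) * ∑ k ∈ Finset.range (m+2), A^k * B^(m+1-k) / ((m+1).choose k : ℚ)) := by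
      norm_num
      ring
    rw [hZ, hL]
    field_simp
    ring

/-- The key rational identity relating the sum to binomial coefficients. -/
theorem stmt8 (p : ℕ) (hp : p.Prime) (a : ℤ) (ha : ¬ (p : ℤ) ∣ a) (n : ℕ) (hn : 1 ≤ n) :
    ∑ k ∈ Finset.Icc 1 n,
        (1 / (a : ℚ) ^ k + 1 / ((p : ℚ) - (a : ℚ)) ^ k) * (p : ℚ) ^ k / (k : ℚ) =
      (p : ℚ) ^ (n + 1) / ((n : ℚ) * ((a : ℚ) * ((p : ℚ) - (a : ℚ))) ^ n) *
        ∑ k ∈ Finset.range n,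
          (a : ℚ) ^ k * ((p : ℚ) - (a : ℚ)) ^ (n - 1 - k) / ((n - 1).choose k : ℚ) := by
  have hA : (a:ℚ) ≠ 0 := by
    simp only [ne_eq, Int.cast_eq_zero]
    rintro rfl
    exact ha (dvd_zero _)
  have hB : (p:ℚ) - (a:ℚ) ≠ 0 := by
    intro h
    have : (a:ℚ) = ((p:ℤ):ℚ) := by push_cast; linarith
    have : a = (p:ℤ) := by exact_mod_cast this
    exact ha (this ▸ dvd_refl _)
  have H := main' (a:ℚ) ((p:ℚ)-(a:ℚ)) hA hB n hn
  rw [show (a:ℚ) + ((p:ℚ)-(a:ℚ)) = (p:ℚ) by ring] at H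
  exact H
end

section
/- Let p be a prime and a an integer coprime to p. For every even positive integer k, v_p((1/a^k + 1/(p-a)^k) · p^k/k) ≥ k - v_p(k/2). -/
/-- For even `k`, `v_p` of the `k`-th term is at least `k - v_p(k/2)`. -/
theorem stmt9 (p : ℕ) (hp : p.Prime) (a : ℤ) (ha : ¬ (p : ℤ) ∣ a)
    (k : ℕ) (hk1 : 1 ≤ k) (hk : Even k) :
    (k : ℤ) - (padicValNat p (k / 2) : ℤ) ≤
      padicValRat p ((1 / (a : ℚ) ^ k + 1 / ((p : ℚ) - (a : ℚ)) ^ k) * (p : ℚ) ^ k / (k : ℚ)) := by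
  haveI : Fact p.Prime := ⟨hp⟩
  have hk0 : k ≠ 0 := by omega
  have ha0 : a ≠ 0 := fun h => ha (h ▸ dvd_zero _)
  have hpa : ¬ (p : ℤ) ∣ ((p : ℤ) - a) := by
    intro h
    exact ha (by simpa using (dvd_sub (dvd_refl (p : ℤ)) h))
  have hb0 : (p : ℤ) - a ≠ 0 := fun h => hpa (h ▸ dvd_zero _)
  have hA : (a : ℚ) ≠ 0 := Int.cast_ne_zero.2 ha0
  have hB : (p : ℚ) - (a : ℚ) ≠ 0 := by
    have := Int.cast_ne_zero (α := ℚ).2 hb0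
    push_cast at this
    exact this
  have hP : (p : ℚ) ≠ 0 := Nat.cast_ne_zero.2 hp.pos.ne'
  have hK : (k : ℚ) ≠ 0 := Nat.cast_ne_zero.2 hk0
  -- the numerator integer
  set n : ℤ := a ^ k + ((p : ℤ) - a) ^ k with hn
  have hnpos : 0 < n := by
    have h1 : 0 < a ^ k := hk.pow_pos ha0
    have h2 : 0 < ((p : ℤ) - a) ^ k := hk.pow_pos hb0
    positivity
  have hn0 : (n : ℚ) ≠ 0 := Int.cast_ne_zero.2 hnpos.ne'
  have had : ((a * ((p : ℤ) - a) : ℤ) : ℚ) ≠ 0 :=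
    Int.cast_ne_zero.2 (mul_ne_zero ha0 hb0)
  have key : (1 / (a : ℚ) ^ k + 1 / ((p : ℚ) - (a : ℚ)) ^ k) * (p : ℚ) ^ k / (k : ℚ)
      = (n : ℚ) * (p : ℚ) ^ k / (((a * ((p : ℤ) - a) : ℤ) : ℚ) ^ k * (k : ℚ)) := by
    rw [hn]
    push_cast
    rw [mul_pow]
    field_simp
    ring
  rw [key, padicValRat.div (mul_ne_zero hn0 (pow_ne_zero _ hP))
      (mul_ne_zero (pow_ne_zero _ had) hK),
    padicValRat.mul hn0 (pow_ne_zero _ hP),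
    padicValRat.mul (pow_ne_zero _ had) hK,
    padicValRat.pow (p := p) (p : ℚ), padicValRat.pow (p := p) ((a * ((p : ℤ) - a) : ℤ) : ℚ), padicValRat.self hp.one_lt]
  have hvad : padicValRat p ((a * ((p : ℤ) - a) : ℤ) : ℚ) = 0 := by
    rw [padicValRat.of_int, padicValInt.eq_zero_of_not_dvd]
    · simp
    · exact fun h => ((Nat.prime_iff_prime_int.1 hp).dvd_mul.1 h).elim ha hpa
  have hvk : padicValRat p ((k : ℕ) : ℚ) = padicValNat p k := padicValRat.of_nat
  have hvn : padicValRat p (n : ℚ) = padicValInt p n := padicValRat.of_int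
  rw [hvad, hvk, hvn]
  -- now an arithmetic statement
  have hsplit : padicValNat p k = padicValNat p 2 + padicValNat p (k / 2) := by
    obtain ⟨m, hm⟩ := hk
    have hm2 : k = 2 * m := by omega
    have hm0 : m ≠ 0 := by omega
    rw [hm2, Nat.mul_div_cancel_left _ (by norm_num), padicValNat.mul (by norm_num) hm0]
  have hkey : (padicValNat p 2 : ℤ) ≤ padicValInt p n := by
    by_cases hp2 : p = 2
    · subst hp2
      have ha2 : ¬ (2:ℤ) ∣ a := by exact_mod_cast ha
      have hodd : Odd a := Int.odd_iff.2 (by omega)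
      have hodd2 : Odd ((2:ℤ) - a) := Int.odd_iff.2 (by omega)
      have h2dvd : (2:ℤ) ∣ n := by
        have h := ((hodd.pow (n := k)).add_odd (hodd2.pow (n := k))).two_dvd
        rw [hn]
        push_cast
        exact h
      have h1 : 1 ≤ padicValInt 2 n := by
        rcases (padicValInt_dvd_iff 1 n).1 (by rw [pow_one]; exact_mod_cast h2dvd) with h | h
        · omega
        · exact h
      have : padicValNat 2 2 = 1 := padicValNat.self (by norm_num)
      rw [this]
      exact_mod_cast h1
    · have : padicValNat p 2 = 0 := padicValNat.eq_zero_of_not_dvd (fun h =>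
        hp2 ((Nat.prime_dvd_prime_iff_eq hp Nat.prime_two).1 h))
      rw [this]
      exact Int.ofNat_nonneg _
  rw [hsplit, Nat.cast_add]
  linarith
end

section
/- Let p be a prime and a an integer not divisible by p. Then in the field of p-adic numbers Q_p, the series Σ_{k=1}^{∞} (1/a^k + 1/(p-a)^k) · p^k/k converges and its sum equals 0. -/
open Finset

private lemma padic_norm_natCast_inv_le (p : ℕ) [hp : Fact p.Prime] (n : ℕ) (hn : n ≠ 0) :
    ‖((n : ℚ_[p]))⁻¹‖ ≤ (n : ℝ) := by
  have h0 : ((n : ℚ_[p])) ≠ 0 := Nat.cast_ne_zero.mpr hn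
  rw [norm_inv, Padic.norm_eq_zpow_neg_valuation h0, Padic.valuation_natCast, ← zpow_neg, neg_neg,
    zpow_natCast]
  calc ((p : ℝ)) ^ (padicValNat p n) = ((p ^ padicValNat p n : ℕ) : ℝ) := by push_cast; ring
    _ ≤ (n : ℝ) := Nat.cast_le.mpr (Nat.le_of_dvd (Nat.pos_of_ne_zero hn) pow_padicValNat_dvd)

private lemma key_ident (K : Type*) [Field K] [CharZero K] (m : ℕ) :
    ∑ k ∈ range (m + 1), (-1 : K) ^ (k + 1) * (m.choose k : K) / ((k : K) + 1)
      = -(1 / ((m : K) + 1)) := by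
  have hm1 : ((m : K) + 1) ≠ 0 := Nat.cast_add_one_ne_zero m
  have h1 : ∀ k ∈ range (m + 1), (-1 : K) ^ (k + 1) * (m.choose k : K) / ((k : K) + 1)
      = ((-1 : K) ^ (k + 1) * (((m + 1).choose (k + 1) : K))) * (1 / ((m : K) + 1)) := by
    intro k _
    have hk1 : ((k : K) + 1) ≠ 0 := Nat.cast_add_one_ne_zero k
    have hcc : ((m : K) + 1) * (m.choose k : K) = ((m + 1).choose (k + 1) : K) * ((k : K) + 1) := by
      exact_mod_cast congrArg (fun t : ℕ => (t : K)) (Nat.add_one_mul_choose_eq m k)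
    field_simp
    linear_combination hcc
  rw [Finset.sum_congr rfl h1, ← Finset.sum_mul]
  have h2 : ∑ i ∈ range (m + 2), (-1 : K) ^ i * ((m + 1).choose i : K) = 0 := by
    have := Int.alternating_sum_range_choose_of_ne (n := m + 1) (by omega)
    exact_mod_cast congrArg (fun t : ℤ => (t : K)) this
  have h3 : ∑ k ∈ range (m + 1), (-1 : K) ^ (k + 1) * (((m + 1).choose (k + 1) : K)) = -1 := by
    have := Finset.sum_range_succ' (fun i => (-1 : K) ^ i * ((m + 1).choose i : K)) (m + 1)
    simp only [pow_zero, one_mul, Nat.choose_zero_right, Nat.cast_one] at this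
    rw [h2] at this
    linear_combination -this
  rw [h3]
  ring

set_option maxHeartbeats 1000000 in
/-- In `ℚ_p`, the series `Σ (1/a^k + 1/(p-a)^k) p^k / k` converges to `0`. -/
theorem stmt15 (p : ℕ) [hp : Fact p.Prime] (a : ℤ) (ha : ¬ (p : ℤ) ∣ a) :
    Filter.Tendsto
      (fun n : ℕ => ∑ k ∈ Finset.Icc 1 n,
        (1 / (a : ℚ_[p]) ^ k + 1 / ((p : ℚ_[p]) - (a : ℚ_[p])) ^ k) * (p : ℚ_[p]) ^ k / (k : ℚ_[p]))
      Filter.atTop (nhds 0) := by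
  -- setup
  have hpa : ¬ (p : ℤ) ∣ (p - a) := by
    intro h
    exact ha ((dvd_sub_right (dvd_refl _)).mp h)
  have ha0 : (a : ℚ_[p]) ≠ 0 := by
    intro h
    apply ha
    have : ‖(a : ℚ_[p])‖ < 1 := by rw [h]; simp
    exact (Padic.norm_intCast_lt_one_iff (k := a)).mp this
  have hb0 : ((p : ℚ_[p]) - (a : ℚ_[p])) ≠ 0 := by
    intro h
    apply hpa
    have hcast : ((((p : ℤ) - a) : ℤ) : ℚ_[p]) = (p : ℚ_[p]) - (a : ℚ_[p]) := by push_cast; ring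
    have : ‖((((p : ℤ) - a) : ℤ) : ℚ_[p])‖ < 1 := by rw [hcast, h]; simp
    exact Padic.norm_intCast_lt_one_iff.mp this
  set x : ℚ_[p] := (p : ℚ_[p]) / (a : ℚ_[p]) with hxdef
  set y : ℚ_[p] := (p : ℚ_[p]) / ((p : ℚ_[p]) - (a : ℚ_[p])) with hydef
  have hnorma : ‖(a : ℚ_[p])‖ = 1 := by
    rcases lt_or_eq_of_le (Padic.norm_int_le_one (p := p) a) with h | h
    · exact absurd ((Padic.norm_intCast_lt_one_iff (k := a)).mp h) ha
    · exact h
  have hp1 : (1 : ℝ) < p := by exact_mod_cast hp.out.one_lt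
  have hx : ‖x‖ < 1 := by
    rw [hxdef, norm_div, hnorma, div_one]
    exact Padic.norm_p_lt_one
  have h1x : (1 : ℚ_[p]) - x ≠ 0 := by
    intro h
    have : ‖(1 : ℚ_[p]) - x‖ > 0 := by
      have : (0:ℝ) < 1 - ‖x‖ := by linarith
      calc (0:ℝ) < 1 - ‖x‖ := this
        _ ≤ ‖(1 : ℚ_[p])‖ - ‖x‖ := by rw [norm_one]
        _ ≤ ‖(1 : ℚ_[p]) - x‖ := norm_sub_norm_le _ _
    rw [h, norm_zero] at this
    exact lt_irrefl 0 this
  have hy' : -x / (1 - x) = y := by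
    rw [div_eq_iff h1x, hxdef, hydef]
    field_simp
    ring
  -- the double-indexed family
  set F : ℕ × ℕ → ℚ_[p] := fun kj =>
    (-1) ^ (kj.1 + 1) * (((kj.2 + kj.1).choose kj.1 : ℚ_[p])) / ((kj.1 : ℚ_[p]) + 1)
      * x ^ (kj.2 + kj.1 + 1) with hFdef
  set r : ℝ := ‖x‖ with hrdef
  have hr0 : 0 ≤ r := norm_nonneg x
  have hr1 : r < 1 := hx
  have hrR : ‖r‖ < 1 := by rw [Real.norm_eq_abs, abs_of_nonneg hr0]; exact hr1
  -- summability of the coefficient sequence (k+1) r^(k+1)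
  have hsum1 : Summable (fun k : ℕ => ((k : ℝ) + 1) * r ^ (k + 1)) := by
    have h := summable_pow_mul_geometric_of_norm_lt_one (R := ℝ) 1 hrR
    have h2 : Summable (fun k : ℕ => ((k + 1 : ℕ) : ℝ) ^ 1 * r ^ (k + 1)) :=
      (summable_nat_add_iff 1).mpr h
    refine h2.congr fun k => ?_
    push_cast; ring
  -- norm bound on F
  have hFbound : ∀ kj : ℕ × ℕ, ‖F kj‖ ≤ (((kj.1 : ℝ) + 1) * r ^ (kj.1 + 1)) * r ^ kj.2 := by
    rintro ⟨k, j⟩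
    have hC : ‖(((j + k).choose k : ℚ_[p]))‖ ≤ 1 := by
      have : (((j + k).choose k : ℚ_[p])) = (((((j + k).choose k : ℕ) : ℤ) : ℚ_[p])) := by
        push_cast; ring
      rw [this]
      exact Padic.norm_int_le_one _
    have hinv : ‖(((k : ℚ_[p]) + 1))⁻¹‖ ≤ (k : ℝ) + 1 := by
      have : ((k : ℚ_[p]) + 1) = (((k + 1 : ℕ) : ℚ_[p])) := by push_cast; ring
      rw [this]
      have := padic_norm_natCast_inv_le p (k + 1) (Nat.succ_ne_zero k)
      exact_mod_cast this
    have hsign : ‖((-1 : ℚ_[p]) ^ (k + 1))‖ = 1 := by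
      rw [norm_pow, norm_neg, norm_one, one_pow]
    calc ‖F (k, j)‖
        = ‖(-1 : ℚ_[p]) ^ (k + 1)‖ * ‖(((j + k).choose k : ℚ_[p]))‖ * ‖((k : ℚ_[p]) + 1)⁻¹‖
            * ‖x‖ ^ (j + k + 1) := by
          rw [hFdef]
          simp only [div_eq_mul_inv, norm_mul, norm_pow]
      _ ≤ 1 * 1 * ((k : ℝ) + 1) * r ^ (j + k + 1) := by
          rw [hsign, hrdef]
          gcongr
      _ = (((k : ℝ) + 1) * r ^ (k + 1)) * r ^ j := by
          rw [one_mul, one_mul]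
          rw [show j + k + 1 = (k + 1) + j by ring, pow_add]
          ring
  -- summability of F
  have hFsummable : Summable F := by
    apply Summable.of_norm_bounded ?_ hFbound
    exact Summable.mul_of_nonneg hsum1 (summable_geometric_of_lt_one hr0 hr1)
      (fun k => mul_nonneg (by positivity) (by positivity)) (fun j => by positivity)
  set S : ℚ_[p] := ∑' kj, F kj with hSdef
  have hF : HasSum F S := hFsummable.hasSum
  -- fiberwise sums over j give the y-series
  have hfiber : ∀ k : ℕ, HasSum (fun j => F (k, j)) (y ^ (k + 1) / ((k : ℚ_[p]) + 1)) := by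
    intro k
    have hbin := hasSum_choose_mul_geometric_of_norm_lt_one (𝕜 := ℚ_[p]) k hx
    set c : ℚ_[p] := (-1) ^ (k + 1) / ((k : ℚ_[p]) + 1) * x ^ (k + 1) with hcdef
    have hthis := hbin.mul_left c
    have hfun : (fun j => F (k, j)) = fun j => c * ((((j + k).choose k : ℚ_[p])) * x ^ j) := by
      funext j
      rw [hFdef, hcdef]
      simp only
      rw [show j + k + 1 = (k + 1) + j by ring, pow_add]
      ring
    have hval : c * (1 / (1 - x) ^ (k + 1)) = y ^ (k + 1) / ((k : ℚ_[p]) + 1) := by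
      rw [← hy', div_pow, neg_pow x (k + 1), hcdef]
      ring
    rw [hfun, ← hval]
    exact hthis
  have hy_sum : HasSum (fun k : ℕ => y ^ (k + 1) / ((k : ℚ_[p]) + 1)) S :=
    hF.prod_fiberwise hfiber
  -- sigma/antidiagonal decomposition gives the negated x-series
  have hFsig : HasSum (F ∘ Finset.HasAntidiagonal.sigmaAntidiagonalEquivProd) S :=
    (Equiv.hasSum_iff Finset.HasAntidiagonal.sigmaAntidiagonalEquivProd).mpr hF
  have hdiag : ∀ m : ℕ, HasSum (fun c : Finset.HasAntidiagonal.antidiagonal m => F c)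
      (-(x ^ (m + 1) / ((m : ℚ_[p]) + 1))) := by
    intro m
    have h1 : HasSum (fun c : Finset.HasAntidiagonal.antidiagonal m => F c)
        (∑ c ∈ (Finset.HasAntidiagonal.antidiagonal m).attach, F c) := hasSum_fintype _
    have h2 : (∑ c ∈ (Finset.HasAntidiagonal.antidiagonal m).attach, F c) = ∑ kj ∈ Finset.HasAntidiagonal.antidiagonal m, F kj :=
      Finset.sum_attach _ _
    have h3 : ∑ kj ∈ Finset.HasAntidiagonal.antidiagonal m, F kj = -(x ^ (m + 1) / ((m : ℚ_[p]) + 1)) := by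
      rw [Finset.Nat.sum_antidiagonal_eq_sum_range_succ_mk]
      have h4 : ∀ k ∈ range (m + 1), F (k, m - k)
          = ((-1 : ℚ_[p]) ^ (k + 1) * ((m.choose k : ℚ_[p])) / ((k : ℚ_[p]) + 1)) * x ^ (m + 1) := by
        intro k hk
        rw [Finset.mem_range] at hk
        have hmk : m - k + k = m := Nat.sub_add_cancel (by omega)
        rw [hFdef]
        simp only
        rw [hmk]
      rw [Finset.sum_congr rfl h4, ← Finset.sum_mul, key_ident]
      ring
    rw [← h3, ← h2]
    exact h1
  have hnegx_sum : HasSum (fun m : ℕ => -(x ^ (m + 1) / ((m : ℚ_[p]) + 1))) S := by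
    apply HasSum.sigma hFsig
    intro m
    exact hdiag m
  -- the x-series is summable in its own right
  have hxsummable : Summable (fun m : ℕ => x ^ (m + 1) / ((m : ℚ_[p]) + 1)) := by
    have := hnegx_sum.summable.neg
    refine this.congr fun m => ?_
    simp
  set L : ℚ_[p] := ∑' m : ℕ, x ^ (m + 1) / ((m : ℚ_[p]) + 1) with hLdef
  have hx_sum : HasSum (fun m : ℕ => x ^ (m + 1) / ((m : ℚ_[p]) + 1)) L := hxsummable.hasSum
  have hSL : S = -L := hnegx_sum.unique hx_sum.neg
  -- combine
  have htot : HasSum (fun k : ℕ =>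
      x ^ (k + 1) / ((k : ℚ_[p]) + 1) + y ^ (k + 1) / ((k : ℚ_[p]) + 1)) 0 := by
    have := hx_sum.add hy_sum
    rwa [hSL, add_neg_cancel] at this
  -- translate to the statement's partial sums
  have hterm : ∀ i : ℕ,
      (1 / (a : ℚ_[p]) ^ (i + 1) + 1 / ((p : ℚ_[p]) - (a : ℚ_[p])) ^ (i + 1))
          * (p : ℚ_[p]) ^ (i + 1) / (((i + 1 : ℕ) : ℚ_[p]))
        = x ^ (i + 1) / ((i : ℚ_[p]) + 1) + y ^ (i + 1) / ((i : ℚ_[p]) + 1) := by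
    intro i
    have hk0 : (((i + 1 : ℕ)) : ℚ_[p]) ≠ 0 := Nat.cast_ne_zero.mpr (Nat.succ_ne_zero i)
    have hk0' : ((i : ℚ_[p]) + 1) ≠ 0 := by
      have : (((i + 1 : ℕ)) : ℚ_[p]) = (i : ℚ_[p]) + 1 := by push_cast; ring
      rwa [this] at hk0
    rw [hxdef, hydef, div_pow, div_pow]
    push_cast
    field_simp
  have htend := htot.tendsto_sum_nat
  have heq : (fun n : ℕ => ∑ k ∈ Finset.Icc 1 n,
        (1 / (a : ℚ_[p]) ^ k + 1 / ((p : ℚ_[p]) - (a : ℚ_[p])) ^ k) * (p : ℚ_[p]) ^ k / (k : ℚ_[p]))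
      = (fun n : ℕ => ∑ i ∈ range n,
        (x ^ (i + 1) / ((i : ℚ_[p]) + 1) + y ^ (i + 1) / ((i : ℚ_[p]) + 1))) := by
    funext n
    rw [← Finset.Ico_add_one_right_eq_Icc, Finset.sum_Ico_eq_sum_range]
    simp only [Nat.add_sub_cancel]
    refine Finset.sum_congr rfl fun i _ => ?_
    have := hterm i
    rw [show 1 + i = i + 1 by ring]
    exact this
  rw [heq]
  exact htend
end

section
/- For every positive integer n: v_2(Σ_{k=1}^{n} 2^k/k) ≥ (n+1) - log_2(n+1), with equality if and only if n = 2^α - 1 for some positive integer α. -/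
open Finset

namespace D18

def S (n : ℕ) : ℚ := ∑ k ∈ Finset.Icc 1 n, (2:ℚ)^k / k
def c (n : ℕ) : ℚ := ∑ j ∈ Finset.range (n+1), ((Nat.choose n j : ℚ))⁻¹

lemma c_pos (n : ℕ) : 0 < c n := by
  apply Finset.sum_pos
  · intro j hj
    have : 0 < n.choose j := Nat.choose_pos (by simpa [Nat.lt_succ_iff] using hj)
    positivity
  · exact ⟨0, by simp⟩

lemma S_pos {n : ℕ} (hn : 1 ≤ n) : 0 < S n := by
  apply Finset.sum_pos
  · intro k hk
    simp only [Finset.mem_Icc] at hk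
    have : (0:ℚ) < k := by exact_mod_cast hk.1
    positivity
  · exact ⟨1, by simp [hn]⟩

lemma c_succ (n : ℕ) : c (n+1) = ((n:ℚ)+2) / (2*((n:ℚ)+1)) * c n + 1 := by
  have key : ∀ j ∈ Finset.range (n+1),
      (((n+1).choose j : ℚ))⁻¹ + (((n+1).choose (j+1) : ℚ))⁻¹
        = ((n:ℚ)+2)/((n:ℚ)+1) * ((n.choose j : ℚ))⁻¹ := by
    intro j hj
    have hj' : j ≤ n := by simpa [Nat.lt_succ_iff] using hj
    have h1 : ((n:ℚ)+1) * (n.choose j : ℚ) = ((n+1).choose j : ℚ) * (((n:ℚ)+1) - j) := by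
      have := Nat.choose_mul_succ_eq n j
      have hc : (((n+1-j : ℕ)) : ℚ) = ((n:ℚ)+1) - j := by
        rw [Nat.cast_sub (by omega)]; push_cast; ring
      have := congrArg (fun x : ℕ => (x : ℚ)) this
      push_cast at this
      rw [← hc] at *
      push_cast
      push_cast at this
      linarith [this]
    have h2 : ((n:ℚ)+1) * (n.choose j : ℚ) = ((n+1).choose (j+1) : ℚ) * ((j:ℚ)+1) := by
      have := Nat.add_one_mul_choose_eq n j
      have := congrArg (fun x : ℕ => (x : ℚ)) this
      push_cast at this
      linarith [this]
    have ha : ((n+1).choose j : ℚ) ≠ 0 := by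
      have : 0 < (n+1).choose j := Nat.choose_pos (by omega)
      positivity
    have hb : ((n+1).choose (j+1) : ℚ) ≠ 0 := by
      have : 0 < (n+1).choose (j+1) := Nat.choose_pos (by omega)
      positivity
    have hd : ((n.choose j : ℚ)) ≠ 0 := by
      have : 0 < n.choose j := Nat.choose_pos hj'
      positivity
    have hn1 : ((n:ℚ)+1) ≠ 0 := by positivity
    field_simp
    nlinarith [h1, h2]
  have hsum := Finset.sum_congr rfl key
  rw [Finset.sum_add_distrib] at hsum
  have e1 : ∑ j ∈ Finset.range (n+1), (((n+1).choose j : ℚ))⁻¹ = c (n+1) - 1 := by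
    have : c (n+1) = (∑ j ∈ Finset.range (n+1), (((n+1).choose j : ℚ))⁻¹)
        + (((n+1).choose (n+1) : ℚ))⁻¹ := by
      simpa [c] using Finset.sum_range_succ (fun j => (((n+1).choose j : ℚ))⁻¹) (n+1)
    simp [Nat.choose_self] at this
    linarith
  have e2 : ∑ j ∈ Finset.range (n+1), (((n+1).choose (j+1) : ℚ))⁻¹ = c (n+1) - 1 := by
    have : c (n+1) = (∑ j ∈ Finset.range (n+1), (((n+1).choose (j+1) : ℚ))⁻¹)
        + (((n+1).choose 0 : ℚ))⁻¹ := by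
      simpa [c] using Finset.sum_range_succ' (fun j => (((n+1).choose j : ℚ))⁻¹) (n+1)
    simp at this
    linarith
  have e3 : ∑ j ∈ Finset.range (n+1), ((n:ℚ)+2)/((n:ℚ)+1) * ((n.choose j : ℚ))⁻¹
      = ((n:ℚ)+2)/((n:ℚ)+1) * c n := by
    rw [← Finset.mul_sum]; rfl
  rw [e1, e2, e3] at hsum
  have hn1 : ((n:ℚ)+1) ≠ 0 := by positivity
  field_simp at hsum ⊢
  linarith

lemma S_succ (n : ℕ) : S (n+1) = S n + (2:ℚ)^(n+1) / ((n:ℚ)+1) := by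
  have := Finset.sum_Icc_succ_top (a := 1) (b := n) (by omega) (fun k => (2:ℚ)^k / k)
  simp only [S] at this ⊢
  rw [this]
  push_cast
  ring

lemma key_identity : ∀ n : ℕ, 1 ≤ n → (n:ℚ) * S n = 2^n * c (n-1) := by
  intro n hn
  induction n with
  | zero => omega
  | succ m ih =>
    rcases Nat.eq_or_lt_of_le hn with h | h
    · have hm0 : m = 0 := by omega
      subst hm0
      norm_num [S, c]
    · have hm : 1 ≤ m := by omega
      have ihm := ih hm
      have hstep := S_succ m
      have hc : c m = ((m:ℚ)+1) / (2*(m:ℚ)) * c (m-1) + 1 := by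
        have := c_succ (m-1)
        have e : m - 1 + 1 = m := by omega
        rw [e] at this
        have ec : ((m-1 : ℕ) : ℚ) = (m:ℚ) - 1 := by
          rw [Nat.cast_sub (by omega)]; simp
        rw [ec] at this
        convert this using 2 <;> ring
      have hm0 : (m:ℚ) ≠ 0 := by
        exact Nat.cast_ne_zero.mpr (by omega : m ≠ 0)
      have : ((m:ℚ)+1) * S (m+1) = ((m:ℚ)+1) * S m + 2^(m+1) := by
        rw [hstep]; field_simp
      rw [show ((m+1 : ℕ) : ℚ) = (m:ℚ)+1 by push_cast; ring, this,
        show (m+1 : ℕ) - 1 = m by omega, hc]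
      have : S m = 2^m * c (m-1) / m := by
        field_simp at ihm ⊢
        linarith
      rw [this]
      field_simp
      ring

-- valuation of sum ≥ uniform bound, positive terms
lemma sum_val_ge {s : Finset ℕ} (hs : s.Nonempty) {f : ℕ → ℚ}
    (hpos : ∀ i ∈ s, 0 < f i) {v : ℤ} (hv : ∀ i ∈ s, v ≤ padicValRat 2 (f i)) :
    v ≤ padicValRat 2 (∑ i ∈ s, f i) := by
  induction hs using Finset.Nonempty.cons_induction with
  | singleton a => simpa using hv a (by simp)
  | cons a s ha hs ih =>
    rw [Finset.sum_cons]
    have hsum_pos : 0 < ∑ i ∈ s, f i :=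
      Finset.sum_pos (fun i hi => hpos i (by simp [hi])) hs
    have hne : f a + ∑ i ∈ s, f i ≠ 0 := by
      have := hpos a (by simp); positivity
    refine le_trans (le_min (hv a (by simp)) ?_) (padicValRat.min_le_padicValRat_add hne)
    exact ih (fun i hi => hpos i (by simp [hi])) (fun i hi => hv i (by simp [hi]))

-- valuation of sum with unique minimal term
lemma sum_val_eq {s : Finset ℕ} {i₀ : ℕ} (hi₀ : i₀ ∈ s) {f : ℕ → ℚ}
    (hpos : ∀ i ∈ s, 0 < f i) {v : ℤ} (hv0 : padicValRat 2 (f i₀) = v)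
    (hv : ∀ i ∈ s, i ≠ i₀ → v + 1 ≤ padicValRat 2 (f i)) :
    padicValRat 2 (∑ i ∈ s, f i) = v := by
  rw [← Finset.add_sum_erase s f hi₀]
  rcases Finset.eq_empty_or_nonempty (s.erase i₀) with h | h
  · simp [h, hv0]
  · have hrest_pos : 0 < ∑ i ∈ s.erase i₀, f i :=
      Finset.sum_pos (fun i hi => hpos i (Finset.mem_of_mem_erase hi)) h
    have hrest : (v:ℤ) + 1 ≤ padicValRat 2 (∑ i ∈ s.erase i₀, f i) :=
      sum_val_ge h (fun i hi => hpos i (Finset.mem_of_mem_erase hi))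
        (fun i hi => hv i (Finset.mem_of_mem_erase hi) (Finset.ne_of_mem_erase hi))
    have h0 := hpos i₀ hi₀
    rw [padicValRat.add_eq_of_lt (by positivity) (ne_of_gt h0) (ne_of_gt hrest_pos)
      (by omega), hv0]

-- valuation of a term 2^k/k
lemma term_val {k : ℕ} (hk : 1 ≤ k) :
    padicValRat 2 ((2:ℚ)^k / k) = (k : ℤ) - padicValNat 2 k := by
  have hk0 : (k:ℚ) ≠ 0 := Nat.cast_ne_zero.mpr (by omega)
  have h2 : padicValRat 2 (2:ℚ) = 1 := by
    have := padicValRat.self (p := 2) one_lt_two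
    exact_mod_cast this
  rw [padicValRat.div (by positivity) hk0, padicValRat.pow,
    h2, padicValRat.of_nat]
  ring

lemma padicValNat_le_log {k : ℕ} (hk : 1 ≤ k) : padicValNat 2 k ≤ Nat.log 2 k := by
  have h := Nat.le_of_dvd (by omega) (pow_padicValNat_dvd (p := 2) (n := k))
  exact (Nat.le_log_iff_pow_le (by norm_num) (by omega)).mpr h

-- k - log k monotone
lemma sub_log_mono : ∀ a b : ℕ, 1 ≤ a → a ≤ b →
    (a : ℤ) - Nat.log 2 a ≤ (b : ℤ) - Nat.log 2 b := by
  intro a b ha hab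
  induction b with
  | zero => omega
  | succ m ih =>
    rcases Nat.eq_or_lt_of_le hab with h | h
    · rw [h]
    · have hm : a ≤ m := by omega
      have h1 : (a:ℤ) - Nat.log 2 a ≤ (m:ℤ) - Nat.log 2 m := ih hm
      have h2 : Nat.log 2 (m+1) ≤ Nat.log 2 m + 1 := by
        have hm1 : 1 ≤ m := le_trans ha hm
        calc Nat.log 2 (m+1) ≤ Nat.log 2 (m*2) :=
              Nat.log_mono_right (by omega)
          _ = Nat.log 2 m + 1 := Nat.log_mul_base (by norm_num) (by omega)
      push_cast
      omega

lemma c_val (m : ℕ) : -(Nat.log 2 m : ℤ) ≤ padicValRat 2 (c m) := by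
  apply sum_val_ge ⟨0, by simp⟩
  · intro j hj
    have : 0 < m.choose j := Nat.choose_pos (by simpa [Nat.lt_succ_iff] using hj)
    positivity
  · intro j hj
    have hpos : 0 < m.choose j := Nat.choose_pos (by simpa [Nat.lt_succ_iff] using hj)
    rw [padicValRat.inv, padicValRat.of_nat, neg_le_neg_iff]
    have := Nat.factorization_choose_le_log (p := 2) (n := m) (k := j)
    rw [Nat.factorization_def _ Nat.prime_two] at this
    exact_mod_cast this

-- valuation of S at odd indices
lemma S_val_odd (n : ℕ) (hn : 1 ≤ n) (hodd : Odd n) :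
    (n : ℤ) - Nat.log 2 (n-1) ≤ padicValRat 2 (S n) := by
  have hid := key_identity n hn
  have hS := S_pos hn
  have hc := c_pos (n-1)
  have hn0 : (n:ℚ) ≠ 0 := Nat.cast_ne_zero.mpr (by omega)
  have h2 : padicValRat 2 (2:ℚ) = 1 := by
    have := padicValRat.self (p := 2) one_lt_two
    exact_mod_cast this
  have hval := congrArg (padicValRat 2) hid
  rw [padicValRat.mul hn0 (ne_of_gt hS), padicValRat.mul (by positivity) (ne_of_gt hc),
    padicValRat.pow, h2, padicValRat.of_nat] at hval
  have hvn : padicValNat 2 n = 0 := by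
    rcases hodd with ⟨t, ht⟩
    exact padicValNat.eq_zero_of_not_dvd (by omega)
  rw [hvn] at hval
  have := c_val (n-1)
  omega

-- decomposition S m = S n + tail
lemma S_decomp {n m : ℕ} (h : n ≤ m) :
    S m = S n + ∑ k ∈ Finset.Icc (n+1) m, (2:ℚ)^k / k := by
  simp only [S]
  rw [← Finset.Ico_add_one_right_eq_Icc, ← Finset.Ico_add_one_right_eq_Icc, ← Finset.Ico_add_one_right_eq_Icc,
    Finset.sum_Ico_consecutive _ (by omega) (by omega)]

lemma S_val_m (n : ℕ) : (n:ℤ) + 2 ≤ padicValRat 2 (S (2*n+3)) := by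
  have h1 := S_val_odd (2*n+3) (by omega) ⟨n+1, by ring⟩
  have h2 : Nat.log 2 (2*n+3-1) ≤ n+1 := by
    have hp : (2:ℕ)^(n+2) = 4 * 2^n := by ring
    have := n.lt_two_pow_self
    have hlt : 2*n+3-1 < 2^(n+2) := by omega
    have := (Nat.log_lt_iff_lt_pow (by norm_num) (by omega : 2*n+3-1 ≠ 0)).mpr hlt
    omega
  omega

lemma tail_pos {n : ℕ} : ∀ k ∈ Finset.Icc (n+1) (2*n+3), 0 < (2:ℚ)^k / k := by
  intro k hk
  simp only [Finset.mem_Icc] at hk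
  have : (0:ℚ) < k := by exact_mod_cast (by omega : 0 < k)
  positivity

lemma tail_val_ge (n : ℕ) (hn : 1 ≤ n) :
    ∀ k ∈ Finset.Icc (n+1) (2*n+3),
      ((n:ℤ) + 1) - Nat.log 2 (n+1) ≤ padicValRat 2 ((2:ℚ)^k / k) := by
  intro k hk
  simp only [Finset.mem_Icc] at hk
  rw [term_val (by omega)]
  have h1 := sub_log_mono (n+1) k (by omega) (by omega)
  have h2 : (padicValNat 2 k : ℤ) ≤ Nat.log 2 k := by
    exact_mod_cast padicValNat_le_log (by omega : 1 ≤ k)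
  omega

lemma val_ge (n : ℕ) (hn : 1 ≤ n) :
    (n:ℤ) + 1 - Nat.log 2 (n+1) ≤ padicValRat 2 (S n) := by
  set T : ℚ := ∑ k ∈ Finset.Icc (n+1) (2*n+3), (2:ℚ)^k / k with hT
  have hTpos : 0 < T :=
    Finset.sum_pos tail_pos ⟨n+1, by simp [Finset.mem_Icc]; omega⟩
  have hdec : S n = -T + S (2*n+3) := by
    have := S_decomp (show n ≤ 2*n+3 by omega)
    rw [← hT] at this
    linarith
  have hSn : S n ≠ 0 := ne_of_gt (S_pos hn)
  have hTval : (n:ℤ) + 1 - Nat.log 2 (n+1) ≤ padicValRat 2 T :=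
    sum_val_ge ⟨n+1, by simp [Finset.mem_Icc]; omega⟩ tail_pos (tail_val_ge n hn)
  have hSm := S_val_m n
  have hmin := padicValRat.min_le_padicValRat_add (p := 2) (q := -T) (r := S (2*n+3))
    (by rw [← hdec]; exact hSn)
  rw [← hdec, padicValRat.neg] at hmin
  have hlog : (0:ℤ) ≤ Nat.log 2 (n+1) := by positivity
  omega

lemma val_eq_pow (α : ℕ) (hα : 1 ≤ α) :
    padicValRat 2 (S (2^α - 1)) = (2^α : ℤ) - α := by
  have h2α : 2 ≤ 2^α := by
    calc 2 = 2^1 := rfl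
    _ ≤ 2^α := Nat.pow_le_pow_right (by norm_num) hα
  set n : ℕ := 2^α - 1 with hn_def
  have hn : 1 ≤ n := by omega
  have hn1 : n + 1 = 2^α := by omega
  set T : ℚ := ∑ k ∈ Finset.Icc (n+1) (2*n+3), (2:ℚ)^k / k with hT
  have hTpos : 0 < T :=
    Finset.sum_pos tail_pos ⟨n+1, by simp [Finset.mem_Icc]; omega⟩
  have hdec : S n = -T + S (2*n+3) := by
    have := S_decomp (show n ≤ 2*n+3 by omega)
    rw [← hT] at this
    linarith
  have hlog2 : Nat.log 2 (n+2) = α := by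
    apply Nat.log_eq_of_pow_le_of_lt_pow
    · omega
    · have : (2:ℕ)^(α+1) = 2 * 2^α := by ring
      omega
  -- valuation of the tail is exactly 2^α - α
  have hTval : padicValRat 2 T = (2^α : ℤ) - α := by
    apply sum_val_eq (i₀ := n+1) (by simp [Finset.mem_Icc]; omega) tail_pos
    · rw [term_val (by omega), hn1]
      have : padicValNat 2 (2^α) = α := padicValNat.prime_pow α
      rw [this]
      push_cast
      ring
    · intro k hk hkne
      simp only [Finset.mem_Icc] at hk
      have hk2 : n + 2 ≤ k := by omega
      rw [term_val (by omega)]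
      have h1 := sub_log_mono (n+2) k (by omega) hk2
      rw [hlog2] at h1
      have h2 : (padicValNat 2 k : ℤ) ≤ Nat.log 2 k := by
        exact_mod_cast padicValNat_le_log (by omega : 1 ≤ k)
      have hcast : ((2^α : ℕ) : ℤ) = 2^α := by push_cast; ring
      omega
  have hSm := S_val_m n
  have hval : padicValRat 2 (S n) = padicValRat 2 (-T) := by
    rw [hdec]
    apply padicValRat.add_eq_of_lt
    · rw [← hdec]; exact ne_of_gt (S_pos hn)
    · exact neg_ne_zero.mpr (ne_of_gt hTpos)
    · exact ne_of_gt (S_pos (by omega))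
    · rw [padicValRat.neg, hTval]
      have hcast : ((2^α : ℕ) : ℤ) = 2^α := by push_cast; ring
      omega
  rw [hval, padicValRat.neg, hTval]

end D18

/-- Dubickas' theorem: `v_2(Σ_{k=1}^n 2^k/k) ≥ (n+1) - log_2(n+1)`, with equality
iff `n = 2^α - 1` for some positive integer `α`. -/
theorem stmt18 (n : ℕ) (hn : 1 ≤ n) :
    ((n : ℝ) + 1) - Real.logb 2 ((n : ℝ) + 1) ≤
      (padicValRat 2 (∑ k ∈ Finset.Icc 1 n, (2 : ℚ) ^ k / (k : ℚ)) : ℝ) ∧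
    ((padicValRat 2 (∑ k ∈ Finset.Icc 1 n, (2 : ℚ) ^ k / (k : ℚ)) : ℝ) =
        ((n : ℝ) + 1) - Real.logb 2 ((n : ℝ) + 1) ↔
      ∃ α : ℕ, 1 ≤ α ∧ n = 2 ^ α - 1) := by
  have hSdef : (∑ k ∈ Finset.Icc 1 n, (2 : ℚ) ^ k / (k : ℚ)) = D18.S n := rfl
  rw [hSdef]
  have hlb2 : Real.logb 2 2 = 1 := Real.logb_self_eq_one (by norm_num : (1:ℝ) < 2)
  have hlogle : (Nat.log 2 (n+1) : ℝ) ≤ Real.logb 2 ((n:ℝ)+1) := by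
    have hpow : (2:ℕ)^(Nat.log 2 (n+1)) ≤ n+1 := Nat.pow_log_le_self 2 (by omega)
    have hpow' : (2:ℝ)^(Nat.log 2 (n+1)) ≤ (n:ℝ)+1 := by exact_mod_cast hpow
    calc (Nat.log 2 (n+1) : ℝ) = Real.logb 2 ((2:ℝ)^(Nat.log 2 (n+1))) := by
          rw [Real.logb_pow, hlb2, mul_one]
      _ ≤ Real.logb 2 ((n:ℝ)+1) := Real.logb_le_logb_of_le (by norm_num)
          (by positivity) hpow'
  constructor
  · have hge := D18.val_ge n hn
    have hge' : ((n:ℝ)+1) - (Nat.log 2 (n+1) : ℝ) ≤ (padicValRat 2 (D18.S n) : ℝ) := by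
      exact_mod_cast hge
    linarith
  constructor
  · -- backward: equality implies n = 2^α - 1
    intro hEq
    set v : ℤ := padicValRat 2 (D18.S n) with hv
    have hlogb_eq : Real.logb 2 ((n:ℝ)+1) = ((n:ℤ) + 1 - v : ℤ) := by
      push_cast
      linarith
    have hβ1 : (1:ℤ) ≤ (n:ℤ) + 1 - v := by
      have h2n : (2:ℝ) ≤ (n:ℝ)+1 := by
        have : (1:ℝ) ≤ (n:ℝ) := by exact_mod_cast hn
        linarith
      have := Real.logb_le_logb_of_le (b := 2) (by norm_num) (by norm_num) h2n
      rw [hlb2, hlogb_eq] at this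
      exact_mod_cast this
    set α : ℕ := ((n:ℤ) + 1 - v).toNat with hα
    have hαcast : ((α:ℤ)) = (n:ℤ) + 1 - v := Int.toNat_of_nonneg (by omega)
    refine ⟨α, by omega, ?_⟩
    have hrpow : (2:ℝ) ^ (Real.logb 2 ((n:ℝ)+1)) = (n:ℝ)+1 :=
      Real.rpow_logb (by norm_num) (by norm_num) (by positivity)
    rw [hlogb_eq] at hrpow
    have : (2:ℝ) ^ (α:ℕ) = (n:ℝ)+1 := by
      rw [← hrpow]
      rw [show (((n:ℤ) + 1 - v : ℤ) : ℝ) = ((α:ℕ) : ℝ) by rw [← hαcast]; push_cast; ring]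
      rw [Real.rpow_natCast]
    have h2 : ((2^α : ℕ) : ℝ) = ((n+1 : ℕ) : ℝ) := by push_cast; linarith
    have h3 : 2^α = n+1 := Nat.cast_injective h2
    omega
  · -- forward: n = 2^α - 1 gives equality
    rintro ⟨α, hα, rfl⟩
    have h2α : 2 ≤ 2^α := by
      calc 2 = 2^1 := rfl
      _ ≤ 2^α := Nat.pow_le_pow_right (by norm_num) hα
    have hval := D18.val_eq_pow α hα
    rw [hval]
    have hn1 : (((2^α - 1 : ℕ)):ℝ) + 1 = (2:ℝ)^α := by
      rw [Nat.cast_sub (by omega)]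
      push_cast
      ring
    rw [hn1, Real.logb_pow, hlb2, mul_one]
    push_cast
    ring
end

section
/- Let p be a prime and a an integer not divisible by p. Write, as rational functions, R_n(X) = Σ_{k=1}^{n} ((X/a)^k/k + (X/(X-a))^k/k). Then X^{n+1} divides the numerator of R_n(X); more precisely, R_n(X) = X^{n+1} · U_n(X) / (a^n (X-a)^n · lcm(1,...,n)) for some polynomial U_n with integer coefficients. -/
open Finset Polynomial

private def Sq (d n : ℕ) : ℚ :=
  ∑ k ∈ Finset.Icc 1 d, (((-1:ℚ)^k * (n.choose (d-k)) + ((n-k).choose (d-k))) / k)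

private lemma icc_range (m : ℕ) (f : ℕ → ℚ) :
    ∑ k ∈ Finset.Icc 1 m, f k = ∑ i ∈ Finset.range m, f (i+1) := by
  rw [← Finset.Ico_add_one_right_eq_Icc, Finset.sum_Ico_eq_sum_range]
  simp [add_comm]

private lemma altsum (m : ℕ) :
    ∑ k ∈ Finset.Icc 1 (m+1), ((-1:ℚ)^k * ((m+1).choose k)) = -1 := by
  have h := Int.alternating_sum_range_choose_of_ne (n := m+1) (by omega)
  have h2 : ((∑ i ∈ range (m+2), (-1:ℤ)^i * ((m+1).choose i) : ℤ) : ℚ) = 0 := by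
    rw [h]; norm_num
  push_cast at h2
  rw [Finset.sum_range_succ'] at h2
  rw [icc_range]
  simp only [Nat.choose_zero_right, pow_zero, Nat.cast_one, mul_one] at h2
  linarith

private lemma alt_harmonic (m : ℕ) :
    ∑ k ∈ Finset.Icc 1 m, ((-1:ℚ)^k * (m.choose k) / k) = - ∑ k ∈ Finset.Icc 1 m, (1:ℚ)/k := by
  induction m with
  | zero => simp
  | succ m ih =>
    have step1 : ∑ k ∈ Finset.Icc 1 (m+1), ((-1:ℚ)^k * ((m+1).choose k) / k)
        = ∑ k ∈ Finset.Icc 1 (m+1), ((-1:ℚ)^k * (m.choose k) / k)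
          + ∑ k ∈ Finset.Icc 1 (m+1), ((-1:ℚ)^k * (m.choose (k-1)) / k) := by
      rw [← Finset.sum_add_distrib]
      apply Finset.sum_congr rfl
      intro k hk
      simp only [Finset.mem_Icc] at hk
      obtain ⟨j, rfl⟩ : ∃ j, k = j + 1 := ⟨k - 1, by omega⟩
      rw [Nat.choose_succ_succ, Nat.add_sub_cancel]
      push_cast
      ring
    have step2 : ∑ k ∈ Finset.Icc 1 (m+1), ((-1:ℚ)^k * (m.choose k) / k)
        = ∑ k ∈ Finset.Icc 1 m, ((-1:ℚ)^k * (m.choose k) / k) := by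
      rw [Finset.sum_Icc_succ_top (by omega)]
      rw [Nat.choose_succ_self]
      simp
    have step3 : ∑ k ∈ Finset.Icc 1 (m+1), ((-1:ℚ)^k * (m.choose (k-1)) / k)
        = -1/(m+1) := by
      have hcongr : ∀ k ∈ Finset.Icc 1 (m+1), ((-1:ℚ)^k * (m.choose (k-1)) / k)
          = ((-1:ℚ)^k * ((m+1).choose k)) / (m+1) := by
        intro k hk
        simp only [Finset.mem_Icc] at hk
        have hc := Nat.add_one_mul_choose_eq m (k-1)
        simp only [Nat.succ_eq_add_one, Nat.sub_add_cancel hk.1] at hc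
        have hc' : ((m:ℚ)+1) * (m.choose (k-1)) = ((m+1).choose k) * k := by
          exact_mod_cast hc
        have hk0 : (k:ℚ) ≠ 0 := by
          simpa using (by omega : k ≠ 0)
        have hm0 : (m:ℚ)+1 ≠ 0 := by positivity
        rw [div_eq_div_iff hk0 hm0]
        linear_combination ((-1:ℚ)^k) * hc'
      rw [Finset.sum_congr rfl hcongr, ← Finset.sum_div, altsum]
    rw [step1, step2, step3, ih, Finset.sum_Icc_succ_top (by omega : 1 ≤ m+1)]
    push_cast
    ring

private lemma Sq_diag (m : ℕ) : Sq m m = 0 := by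
  unfold Sq
  have hcongr : ∀ k ∈ Finset.Icc 1 m, (((-1:ℚ)^k * (m.choose (m-k)) + ((m-k).choose (m-k))) / k)
      = ((-1:ℚ)^k * (m.choose k) / k) + 1/k := by
    intro k hk
    simp only [Finset.mem_Icc] at hk
    rw [Nat.choose_symm hk.2, Nat.choose_self]
    have hk0 : (k:ℚ) ≠ 0 := by simpa using (by omega : k ≠ 0)
    push_cast
    field_simp
  rw [Finset.sum_congr rfl hcongr, Finset.sum_add_distrib, alt_harmonic]
  ring

private lemma Sq_rec (N e : ℕ) (he : e + 1 ≤ N) :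
    Sq (e+1) (N+1) = Sq (e+1) N + Sq e N := by
  unfold Sq
  have hsplit : ∀ k ∈ Finset.Icc 1 (e+1),
      (((-1:ℚ)^k * ((N+1).choose (e+1-k)) + ((N+1-k).choose (e+1-k))) / k)
      = (((-1:ℚ)^k * (N.choose (e+1-k)) + ((N-k).choose (e+1-k))) / k)
        + (if k = e+1 then 0 else (((-1:ℚ)^k * (N.choose (e-k)) + ((N-k).choose (e-k))) / k)) := by
    intro k hk
    simp only [Finset.mem_Icc] at hk
    by_cases hke : k = e+1
    · subst hke
      simp only [Nat.sub_self, if_pos rfl, add_zero]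
      norm_num
    · have hk2 : k ≤ e := by omega
      rw [if_neg hke]
      have h1 : e + 1 - k = (e - k) + 1 := by omega
      have h2 : N + 1 - k = (N - k) + 1 := by omega
      rw [h1, h2, Nat.choose_succ_succ, Nat.choose_succ_succ]
      push_cast
      ring
  rw [Finset.sum_congr rfl hsplit, Finset.sum_add_distrib]
  congr 1
  rw [Finset.sum_Icc_succ_top (by omega : 1 ≤ e+1), if_pos rfl, add_zero]
  apply Finset.sum_congr rfl
  intro k hk
  simp only [Finset.mem_Icc] at hk
  rw [if_neg (by omega)]

private lemma Sq_key : ∀ n d : ℕ, 1 ≤ d → d ≤ n → Sq d n = 0 := by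
  intro n
  induction n with
  | zero => intro d h1 h2; omega
  | succ N ih =>
    intro d h1 h2
    by_cases hd : d = N + 1
    · subst hd; exact Sq_diag _
    · obtain ⟨e, rfl⟩ : ∃ e, d = e + 1 := ⟨d - 1, by omega⟩
      have he : e + 1 ≤ N := by omega
      rw [Sq_rec N e he, ih (e+1) h1 he]
      rcases Nat.eq_zero_or_pos e with h | h
      · subst h; simp [Sq]
      · rw [ih e h (by omega)]
        ring

private noncomputable def Qp (a : ℤ) (n : ℕ) : Polynomial ℤ :=
  ∑ k ∈ Finset.Icc 1 n, Polynomial.C (((Finset.lcm (Finset.Icc 1 n) id : ℕ) / k : ℕ) : ℤ) *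
    (((Polynomial.X - Polynomial.C a)^n * Polynomial.C (a^(n-k))
      + (Polynomial.X - Polynomial.C a)^(n-k) * Polynomial.C (a^n)) * Polynomial.X ^ k)

private lemma coeff_sub_pow (a : ℤ) (N j : ℕ) :
    ((Polynomial.X - Polynomial.C a)^N).coeff j = (-a)^(N-j) * (N.choose j) := by
  rw [sub_eq_add_neg, ← Polynomial.C_neg, Polynomial.coeff_X_add_C_pow]

private lemma Qp_coeff (a : ℤ) (n d : ℕ) (hn : 1 ≤ n) (hd : d ≤ n) :
    (Qp a n).coeff d = 0 := by
  set L : ℕ := Finset.lcm (Finset.Icc 1 n) id with hL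
  have hcoeff : (Qp a n).coeff d = ∑ k ∈ Finset.Icc 1 n,
      ((L / k : ℕ) : ℤ) * (if k ≤ d then
        ((-a)^(n-(d-k)) * (n.choose (d-k)) * a^(n-k)
          + (-a)^((n-k)-(d-k)) * ((n-k).choose (d-k)) * a^n) else 0) := by
    rw [Qp, Polynomial.finset_sum_coeff]
    apply Finset.sum_congr rfl
    intro k hk
    rw [Polynomial.coeff_C_mul, Polynomial.coeff_mul_X_pow']
    by_cases hkd : k ≤ d
    · simp only [if_pos hkd]
      rw [Polynomial.coeff_add, Polynomial.coeff_mul_C, Polynomial.coeff_mul_C,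
        coeff_sub_pow, coeff_sub_pow]
    · simp only [if_neg hkd, mul_zero]
  rcases Nat.eq_zero_or_pos d with h0 | hd1
  · subst h0
    rw [hcoeff]
    apply Finset.sum_eq_zero
    intro k hk
    simp only [Finset.mem_Icc] at hk
    rw [if_neg (by omega), mul_zero]
  · have hsub : Finset.Icc 1 d ⊆ Finset.Icc 1 n := Finset.Icc_subset_Icc_right hd
    have hcoeff2 : (Qp a n).coeff d = ∑ k ∈ Finset.Icc 1 d,
        ((L / k : ℕ) : ℤ) *
          ((-a)^(n-(d-k)) * (n.choose (d-k)) * a^(n-k)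
            + (-a)^((n-k)-(d-k)) * ((n-k).choose (d-k)) * a^n) := by
      rw [hcoeff, ← Finset.sum_subset hsub (by
        intro k hk hk'
        simp only [Finset.mem_Icc] at hk hk'
        rw [if_neg (by omega), mul_zero])]
      apply Finset.sum_congr rfl
      intro k hk
      simp only [Finset.mem_Icc] at hk
      rw [if_pos hk.2]
    have hcast : (((Qp a n).coeff d : ℤ) : ℚ) = 0 := by
      rw [hcoeff2, Int.cast_sum]
      have hterm : ∀ k ∈ Finset.Icc 1 d,
          ((((L / k : ℕ) : ℤ) *
            ((-a)^(n-(d-k)) * (n.choose (d-k)) * a^(n-k)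
              + (-a)^((n-k)-(d-k)) * ((n-k).choose (d-k)) * a^n) : ℤ) : ℚ)
          = ((-1:ℚ)^(n-d) * (a:ℚ)^(2*n-d) * L) *
              (((-1:ℚ)^k * (n.choose (d-k)) + ((n-k).choose (d-k))) / k) := by
        intro k hk
        simp only [Finset.mem_Icc] at hk
        have hdvd : k ∣ L := Finset.dvd_lcm (f := id) (by simp only [Finset.mem_Icc]; omega)
        have hk0 : (k:ℚ) ≠ 0 := by simpa using (by omega : k ≠ 0)
        have hLk : ((L / k : ℕ) : ℚ) = (L:ℚ) / k := Nat.cast_div hdvd hk0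
        have e1 : n - (d-k) = (n-d) + k := by omega
        have e2 : (n-k) - (d-k) = n - d := by omega
        have e3 : ((n-d) + k) + (n-k) = 2*n - d := by omega
        have e4 : (n-d) + n = 2*n - d := by omega
        have p1 : (a:ℚ)^(n-d) * (a:ℚ)^k * (a:ℚ)^(n-k) = (a:ℚ)^(2*n-d) := by
          rw [← pow_add, ← pow_add, e3]
        have p2 : (a:ℚ)^(n-d) * (a:ℚ)^n = (a:ℚ)^(2*n-d) := by
          rw [← pow_add, e4]
        have hLk2 : (((L / k : ℕ) : ℤ) : ℚ) = (L:ℚ) / k := by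
          rw [Int.cast_natCast, hLk]
        rw [Int.cast_mul, hLk2]
        push_cast
        rw [e1, e2]
        rw [neg_pow, neg_pow,
          show ((-1:ℚ))^(n-d+k) = (-1:ℚ)^(n-d) * (-1:ℚ)^k from by rw [pow_add],
          show ((a:ℚ))^(n-d+k) = (a:ℚ)^(n-d) * (a:ℚ)^k from by rw [pow_add]]
        field_simp
        linear_combination ((L:ℚ) * (n.choose (d-k)) * (-1:ℚ)^(n-d) * (-1:ℚ)^k) * p1
          + ((L:ℚ) * ((n-k).choose (d-k)) * (-1:ℚ)^(n-d)) * p2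
      rw [Finset.sum_congr rfl hterm, ← Finset.mul_sum]
      have hkey := Sq_key n d hd1 hd
      unfold Sq at hkey
      rw [hkey, mul_zero]
    exact_mod_cast hcast

private lemma Qp_dvd (a : ℤ) (n : ℕ) (hn : 1 ≤ n) :
    (Polynomial.X)^(n+1) ∣ Qp a n := by
  rw [Polynomial.X_pow_dvd_iff]
  intro d hd
  exact Qp_coeff a n d hn (by omega)

/-- `R_n(X)` vanishes to order at least `n+1` at `X = 0`: there is an integer polynomial `U_n`
with `R_n(X) = X^{n+1} U_n(X) / (a^n (X-a)^n lcm(1,…,n))` as rational functions. -/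
theorem stmt19 (p : ℕ) (hp : p.Prime) (a : ℤ) (ha : ¬ (p : ℤ) ∣ a) (n : ℕ) (hn : 1 ≤ n) :
    ∃ U : Polynomial ℤ, ∀ x : ℚ, x ≠ 0 → x - (a : ℚ) ≠ 0 →
      ∑ k ∈ Finset.Icc 1 n, ((x / (a : ℚ)) ^ k / (k : ℚ) + (x / (x - (a : ℚ))) ^ k / (k : ℚ)) =
        x ^ (n + 1) * (Polynomial.aeval x U) /
          ((a : ℚ) ^ n * (x - (a : ℚ)) ^ n * ((Finset.lcm (Finset.Icc 1 n) id : ℕ) : ℚ)) := by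
  have ha0 : a ≠ 0 := by rintro rfl; exact ha (dvd_zero _)
  have haq : (a:ℚ) ≠ 0 := Int.cast_ne_zero.mpr ha0
  set L : ℕ := Finset.lcm (Finset.Icc 1 n) id with hLdef
  have hL0 : L ≠ 0 := by
    intro h
    rw [hLdef, Finset.lcm_eq_zero_iff] at h
    obtain ⟨k, hk, hk0⟩ := h
    simp only [Finset.mem_coe, Finset.mem_Icc, id_eq] at hk hk0
    omega
  have hLq : (L:ℚ) ≠ 0 := Nat.cast_ne_zero.mpr hL0
  obtain ⟨U, hU⟩ := Qp_dvd a n hn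
  refine ⟨U, fun x hx hxa => ?_⟩
  have key : Polynomial.aeval x (Qp a n) = x^(n+1) * Polynomial.aeval x U := by
    rw [hU]; simp
  rw [← key, Qp, map_sum, Finset.sum_div]
  apply Finset.sum_congr rfl
  intro k hk
  simp only [Finset.mem_Icc] at hk
  simp only [map_mul, map_add, map_pow, map_sub, Polynomial.aeval_X, Polynomial.aeval_C]
  have hdvd : k ∣ L := Finset.dvd_lcm (f := id) (by simp only [Finset.mem_Icc]; omega)
  have hk0 : (k:ℚ) ≠ 0 := by simpa using (by omega : k ≠ 0)
  have hck : ((L / k : ℕ):ℚ) * k = (L:ℚ) := by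
    rw [Nat.cast_div hdvd hk0]
    field_simp
  have hc0 : ((L / k : ℕ):ℚ) ≠ 0 := by
    have hkL : k ≤ L := Nat.le_of_dvd (Nat.pos_of_ne_zero hL0) hdvd
    have h1 : 0 < L / k := Nat.div_pos hkL (by omega)
    exact Nat.cast_ne_zero.mpr (by omega)
  have han : (a:ℚ)^(n-k) * (a:ℚ)^k = (a:ℚ)^n := by
    rw [← pow_add, Nat.sub_add_cancel hk.2]
  have hxan : (x - (a:ℚ))^(n-k) * (x - (a:ℚ))^k = (x - (a:ℚ))^n := by
    rw [← pow_add, Nat.sub_add_cancel hk.2]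
  have hmap : ∀ z : ℤ, (algebraMap ℤ ℚ) z = (z:ℚ) := fun z => rfl
  simp only [hmap, ← hLdef]
  push_cast
  simp only [← Int.natCast_div, Int.cast_natCast]
  rw [div_pow, div_pow, ← hck, ← han, ← hxan]
  field_simp
end
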